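/- arXiv:2004.02017 — 9 statements merged into one kernel-verified Lean document; each statement's English description precedes it below -/
import Mathlib

section
/- Let B be a pseudometric component of a distance space X (i.e., B is an equivalence class for the relation d_X(x,y) < ∞) and let f : X → [0,∞] satisfy f(x)+f(y) ≥ d_X(x,y) for all x,y. Then f is an extremal (minimal) such function with f finite exactly on B if and only if f[X∖B] ⊆ {∞} and f(x) = sup_{y∈B}(d_X(x,y) - f(y)) < ∞ for every x ∈ B. -/
open scoped ENNReal

structure DistSpace (X : Type*) where
  d : X → X → ℝ≥0∞
  refl : ∀ x, d x x = 0
  symm : ∀ x y, d x y = d y x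
  triangle : ∀ x y z, d x z ≤ d x y + d y z

def Delta {X : Type*} (D : DistSpace X) : Set (X → ℝ≥0∞) :=
  {f | ∀ x y, D.d x y ≤ f x + f y}

def Extremal {X : Type*} (D : DistSpace X) (f : X → ℝ≥0∞) : Prop :=
  f ∈ Delta D ∧ ∀ g ∈ Delta D, g ≤ f → g = f

/-- Characterization of the extremal functions finite exactly on a pseudometric
component `B` of `X`: for `f ∈ ΔX`, `f` is extremal and finite exactly on `B`
iff `f` equals `∞` outside `B` and `f x = sup_{y∈B}(d x y - f y) < ∞` on `B`. -/
theorem stmt4 {X : Type*} (D : DistSpace X) (B : Set X) (x₀ : X)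
    (hB : B = {y | D.d x₀ y ≠ ∞}) (f : X → ℝ≥0∞) (hf : f ∈ Delta D) :
    (Extremal D f ∧ (∀ x ∈ B, f x ≠ ∞) ∧ (∀ x ∉ B, f x = ∞)) ↔
    ((∀ x ∉ B, f x = ∞) ∧
      ∀ x ∈ B, (f x = ⨆ y ∈ B, D.d x y - f y) ∧ f x ≠ ∞) := by
  classical
  have hx0 : x₀ ∈ B := by rw [hB]; simp [D.refl]
  constructor
  · rintro ⟨⟨hfΔ, hext⟩, hfin, hinf⟩
    refine ⟨hinf, fun x hx => ⟨?_, hfin x hx⟩⟩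
    · set s := ⨆ y ∈ B, D.d x y - f y with hs
      have hle : s ≤ f x := by
        refine iSup₂_le fun y hy => ?_
        rw [tsub_le_iff_right]
        exact hfΔ x y
      have hkey : ∀ b, D.d x b ≤ s + f b := by
        intro b
        by_cases hb : b ∈ B
        · rw [← tsub_le_iff_right]
          exact le_iSup₂ (f := fun y (_ : y ∈ B) => D.d x y - f y) b hb
        · simp [hinf b hb]
      set g := Function.update f x s with hg
      have hgΔ : g ∈ Delta D := by
        intro a b
        by_cases ha : a = x <;> by_cases hbx : b = x
        · subst ha; subst hbx; simp [D.refl]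
        · subst ha
          simpa [hg, Function.update, hbx] using hkey b
        · subst hbx
          rw [D.symm]
          simpa [hg, Function.update, ha, add_comm] using hkey a
        · simpa [hg, Function.update, ha, hbx] using hfΔ a b
      have hgle : g ≤ f := by
        intro a
        by_cases ha : a = x
        · subst ha; simpa [hg] using hle
        · simp [hg, Function.update, ha]
      have := hext g hgΔ hgle
      rw [← this]
      simp [hg]
  · rintro ⟨hinf, hsup⟩
    refine ⟨⟨hf, fun g hg hgle => ?_⟩, fun x hx => (hsup x hx).2, hinf⟩
    funext x
    by_cases hx : x ∈ B
    · refine le_antisymm (hgle x) ?_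
      rw [(hsup x hx).1]
      refine iSup₂_le fun y hy => ?_
      rw [tsub_le_iff_right]
      exact (hg x y).trans (add_le_add le_rfl (hgle y))
    · have hdx : D.d x x₀ = ⊤ := by
        rw [D.symm]
        rw [hB] at hx
        simpa using hx
      have hgx : g x = ⊤ := by
        have h1 : (⊤ : ℝ≥0∞) ≤ g x + g x₀ := hdx ▸ hg x x₀
        have h2 : g x₀ ≠ ⊤ := fun h =>
          (hsup x₀ hx0).2 (top_le_iff.mp (h ▸ hgle x₀))
        by_contra hgx
        exact absurd (top_le_iff.mp h1) (by simp [ENNReal.add_eq_top, hgx, h2])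
      rw [hgx, hinf x hx]
end

section
/- For any distance space X and any non-expanding map f : EX → EX from the injective envelope of X to itself satisfying f ∘ e_X = e_X (where e_X : X → EX is the canonical isometry x ↦ d_X(x,·)), the map f is the identity map of EX. -/
open scoped ENNReal

noncomputable def supDist {X : Type*} (f g : X → ℝ≥0∞) : ℝ≥0∞ :=
  ⨆ x, (f x - g x) ⊔ (g x - f x)

lemma extremal_lip {X : Type*} (D : DistSpace X) {h : X → ℝ≥0∞}
    (hh : Extremal D h) (x z : X) : h z ≤ h x + D.d x z := by
  classical
  set h' : X → ℝ≥0∞ := fun y => if y = z then min (h z) (h x + D.d x z) else h y with hh'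
  have key : ∀ a b : X, D.d a b ≤ min (h a) (h x + D.d x a) + h b := by
    intro a b
    rw [← min_add_add_right]
    refine le_min (hh.1 a b) ?_
    calc D.d a b ≤ D.d a x + D.d x b := D.triangle a x b
      _ ≤ D.d a x + (h x + h b) := add_le_add le_rfl (hh.1 x b)
      _ = (h x + D.d x a) + h b := by rw [D.symm a x]; ring
  have hdel : h' ∈ Delta D := by
    intro a b
    by_cases ha : a = z <;> by_cases hb : b = z
    · rw [ha, hb, D.refl]; exact zero_le
    · simp only [hh', if_pos ha, if_neg hb]
      rw [ha]; exact key z b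
    · simp only [hh', if_neg ha, if_pos hb]
      rw [hb, D.symm a z, add_comm]; exact key z a
    · simp only [hh', if_neg ha, if_neg hb]; exact hh.1 a b
  have hle : h' ≤ h := by
    intro y
    by_cases hy : y = z
    · subst hy; simp [hh', min_le_left]
    · simp [hh', hy]
  have heq := hh.2 h' hdel hle
  have hz : h' z = h z := by rw [heq]
  have : min (h z) (h x + D.d x z) = h z := by simpa [hh'] using hz
  calc h z = min (h z) (h x + D.d x z) := this.symm
    _ ≤ h x + D.d x z := min_le_right _ _

lemma supDist_extremal_e {X : Type*} (D : DistSpace X) {h : X → ℝ≥0∞}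
    (hh : Extremal D h) (x : X) : supDist h (fun z => D.d x z) = h x := by
  apply le_antisymm
  · refine iSup_le fun z => max_le ?_ ?_
    · rw [tsub_le_iff_right]; exact extremal_lip D hh x z
    · rw [tsub_le_iff_right, add_comm]; exact (D.symm x z ▸ hh.1 z x : _)
  · calc h x = (h x - D.d x x) ⊔ (D.d x x - h x) := by simp [D.refl]
      _ ≤ _ := le_iSup (fun z => (h z - D.d x z) ⊔ (D.d x z - h z)) x

lemma e_extremal {X : Type*} (D : DistSpace X) (x : X) :
    Extremal D (fun z => D.d x z) := by
  constructor
  · intro a b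
    calc D.d a b ≤ D.d a x + D.d x b := D.triangle a x b
      _ = D.d x a + D.d x b := by rw [D.symm a x]
  · intro g hg hle
    have hgx : g x = 0 := le_antisymm (by simpa [D.refl] using hle x) zero_le
    funext y
    refine le_antisymm (hle y) ?_
    have := hg x y
    simpa [hgx] using this

/-- If `F` maps the injective envelope `EX` (the extremal functions, with the
sup-distance) to itself in a non-expanding way and `F ∘ e_X = e_X` for the
canonical isometry `e_X : x ↦ d_X(x,·)`, then `F` is the identity on `EX`. -/
theorem stmt5 {X : Type*} (D : DistSpace X)
    (F : (X → ℝ≥0∞) → (X → ℝ≥0∞))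
    (hmap : ∀ f, Extremal D f → Extremal D (F f))
    (hne : ∀ f g, Extremal D f → Extremal D g → supDist (F f) (F g) ≤ supDist f g)
    (hfix : ∀ x, F (fun z => D.d x z) = fun z => D.d x z) :
    ∀ f, Extremal D f → F f = f := by
  intro f hf
  have hFf := hmap f hf
  have hle : F f ≤ f := by
    intro x
    have h1 := hne f (fun z => D.d x z) hf (e_extremal D x)
    rw [hfix x] at h1
    rw [supDist_extremal_e D hFf x, supDist_extremal_e D hf x] at h1
    exact h1
  exact hf.2 (F f) hFf.1 hle
end

section
/- For any isometry i : X → Y between distance spaces and any Lipschitz function f : X → [-∞,∞] (with the extended-real distance), there exists a Lipschitz function F : Y → [-∞,∞] such that F ∘ i = f and Lip(F) = Lip(f). -/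
open scoped ENNReal NNReal

/-- The distance on the extended real line `[-∞,∞]` : `|x-y|` for finite `x,y`,
`0` if `x = y`, and `∞` otherwise. -/
noncomputable def eRealDist (a b : EReal) : ℝ≥0∞ :=
  if a = b then 0
  else if a = ⊤ ∨ a = ⊥ ∨ b = ⊤ ∨ b = ⊥ then ∞
  else ENNReal.ofReal |a.toReal - b.toReal|

lemma eRealDist_self (a : EReal) : eRealDist a a = 0 := by simp [eRealDist]

lemma eRealDist_cases {a b : EReal} (h : eRealDist a b ≠ ∞) :
    a = b ∨ (a ≠ ⊤ ∧ a ≠ ⊥ ∧ b ≠ ⊤ ∧ b ≠ ⊥) := by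
  by_cases hab : a = b
  · exact Or.inl hab
  by_cases htb : a = ⊤ ∨ a = ⊥ ∨ b = ⊤ ∨ b = ⊥
  · exact absurd (by simp [eRealDist, hab, htb]) h
  · push_neg at htb
    exact Or.inr ⟨htb.1, htb.2.1, htb.2.2.1, htb.2.2.2⟩

lemma eRealDist_eq_zero {a b : EReal} (h : eRealDist a b = 0) : a = b := by
  rcases eRealDist_cases (h ▸ ENNReal.zero_ne_top) with h' | ⟨h1, h2, h3, h4⟩
  · exact h'
  by_cases hab : a = b
  · exact hab
  have : eRealDist a b = ENNReal.ofReal |a.toReal - b.toReal| := by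
    simp [eRealDist, hab, h1, h2, h3, h4]
  rw [this, ENNReal.ofReal_eq_zero] at h
  have : a.toReal = b.toReal := by
    have := abs_nonneg (a.toReal - b.toReal); nlinarith [le_abs_self (a.toReal - b.toReal), neg_abs_le (a.toReal - b.toReal)]
  have h5 : (a.toReal : EReal) = (b.toReal : EReal) := by exact_mod_cast this
  rw [EReal.coe_toReal h1 h2, EReal.coe_toReal h3 h4] at h5
  exact absurd h5 hab

lemma eRealDist_coe (a b : ℝ) : eRealDist (a : EReal) (b : EReal) = ENNReal.ofReal |a - b| := by
  by_cases hab : (a : EReal) = (b : EReal)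
  · have : a = b := by exact_mod_cast hab
    simp [eRealDist, hab, this]
  · simp [eRealDist, hab]

lemma abs_toReal_le {a b : EReal} {C : ℝ≥0∞} (ha : a ≠ ⊤) (ha' : a ≠ ⊥)
    (hb : b ≠ ⊤) (hb' : b ≠ ⊥) (hC : C ≠ ∞) (h : eRealDist a b ≤ C) :
    |a.toReal - b.toReal| ≤ C.toReal := by
  by_cases hab : a = b
  · simp [hab, ENNReal.toReal_nonneg]
  have heq : eRealDist a b = ENNReal.ofReal |a.toReal - b.toReal| := by
    simp [eRealDist, hab, ha, ha', hb, hb']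
  rw [heq] at h
  exact (ENNReal.ofReal_le_iff_le_toReal hC).mp h

lemma mcshane {X Y : Type*} (DX : DistSpace X) (DY : DistSpace Y)
    (i : X → Y) (hi : ∀ a b, DY.d (i a) (i b) = DX.d a b)
    (f : X → EReal) (L : ℝ≥0) (hL0 : 0 < L)
    (hL : ∀ x y, eRealDist (f x) (f y) ≤ (L : ℝ≥0∞) * DX.d x y) :
    ∃ F : Y → EReal, (∀ x, F (i x) = f x) ∧
      ∀ z w, eRealDist (F z) (F w) ≤ (L : ℝ≥0∞) * DY.d z w := by
  classical
  set A : Y → Set ℝ := fun y =>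
    {r | ∃ x, DY.d (i x) y ≠ ∞ ∧ r = (f x).toReal + (L : ℝ) * (DY.d (i x) y).toReal} with hA
  -- two points reachable from the same y are at finite distance
  have hcomp : ∀ {y : Y} {x x' : X}, DY.d (i x) y ≠ ∞ → DY.d (i x') y ≠ ∞ →
      DX.d x x' ≠ ∞ := by
    intro y x x' h1 h2
    have : DX.d x x' ≤ DY.d (i x) y + DY.d (i x') y := by
      rw [← hi]
      calc DY.d (i x) (i x') ≤ DY.d (i x) y + DY.d y (i x') := DY.triangle _ _ _
        _ = DY.d (i x) y + DY.d (i x') y := by rw [DY.symm y (i x')]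
    exact ne_top_of_le_ne_top (ENNReal.add_ne_top.mpr ⟨h1, h2⟩) this
  -- class matching across finite distances
  have hclass : ∀ {x x' : X}, DX.d x x' ≠ ∞ →
      (f x = ⊤ → f x' = ⊤) ∧ (f x = ⊥ → f x' = ⊥) ∧
      (f x ≠ ⊤ → f x ≠ ⊥ → f x' ≠ ⊤ ∧ f x' ≠ ⊥) := by
    intro x x' hd
    have hfin : eRealDist (f x) (f x') ≠ ∞ :=
      ne_top_of_le_ne_top (ENNReal.mul_ne_top ENNReal.coe_ne_top hd) (hL x x')
    rcases eRealDist_cases hfin with he | ⟨h1, h2, h3, h4⟩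
    · exact ⟨fun h => he ▸ h, fun h => he ▸ h, fun _ _ => by rw [← he]; exact ⟨‹f x ≠ ⊤›, ‹f x ≠ ⊥›⟩⟩
    · exact ⟨fun h => absurd h h1, fun h => absurd h h2, fun _ _ => ⟨h3, h4⟩⟩
  -- abs bound from Lipschitz
  have habs : ∀ {x x' : X}, DX.d x x' ≠ ∞ → f x ≠ ⊤ → f x ≠ ⊥ → f x' ≠ ⊤ → f x' ≠ ⊥ →
      |(f x).toReal - (f x').toReal| ≤ (L : ℝ) * (DX.d x x').toReal := by
    intro x x' hd h1 h2 h3 h4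
    have := abs_toReal_le h1 h2 h3 h4 (ENNReal.mul_ne_top ENNReal.coe_ne_top hd) (hL x x')
    rwa [ENNReal.toReal_mul, ENNReal.coe_toReal] at this
  -- lower bound for A y given a finite-valued reachable point
  have hlb : ∀ (y : Y) (x0 : X), DY.d (i x0) y ≠ ∞ → f x0 ≠ ⊤ → f x0 ≠ ⊥ →
      ∀ r ∈ A y, (f x0).toReal - (L : ℝ) * (DY.d (i x0) y).toReal ≤ r := by
    intro y x0 hx0 ht hb r hr
    obtain ⟨x, hx, rfl⟩ := hr
    have hdx : DX.d x x0 ≠ ∞ := hcomp hx hx0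
    have hdx0x : DX.d x0 x ≠ ∞ := by rw [DX.symm]; exact hdx
    have hfx := (hclass hdx0x).2.2 ht hb
    have habs' := habs hdx hfx.1 hfx.2 ht hb
    have htri : (DX.d x x0).toReal ≤ (DY.d (i x) y).toReal + (DY.d (i x0) y).toReal := by
      rw [← ENNReal.toReal_add hx hx0]
      refine ENNReal.toReal_mono (ENNReal.add_ne_top.mpr ⟨hx, hx0⟩) ?_
      rw [← hi]
      calc DY.d (i x) (i x0) ≤ DY.d (i x) y + DY.d y (i x0) := DY.triangle _ _ _
        _ = DY.d (i x) y + DY.d (i x0) y := by rw [DY.symm y (i x0)]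
    have hL' : (0:ℝ) ≤ (L : ℝ) := L.2
    have h1 := abs_le.mp habs'
    nlinarith [ENNReal.toReal_nonneg (a := DY.d (i x) y)]
  -- comparison of infima
  have hcmp : ∀ (z w : Y), DY.d z w ≠ ∞ →
      ∀ x0 : X, DY.d (i x0) z ≠ ∞ → f x0 ≠ ⊤ → f x0 ≠ ⊥ →
      sInf (A z) ≤ sInf (A w) + (L : ℝ) * (DY.d z w).toReal := by
    intro z w hzw x0 hx0 ht hb
    have hx0w : DY.d (i x0) w ≠ ∞ :=
      ne_top_of_le_ne_top (ENNReal.add_ne_top.mpr ⟨hx0, hzw⟩) (DY.triangle (i x0) z w)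
    have hbddz : BddBelow (A z) := ⟨_, fun r hr => hlb z x0 hx0 ht hb r hr⟩
    have hnew : (A w).Nonempty := ⟨_, ⟨x0, hx0w, rfl⟩⟩
    have key : ∀ r ∈ A w, sInf (A z) - (L : ℝ) * (DY.d z w).toReal ≤ r := by
      intro r hr
      obtain ⟨x, hx, rfl⟩ := hr
      have hxz : DY.d (i x) z ≠ ∞ := by
        have hb2 : DY.d (i x) w + DY.d w z ≠ ⊤ := by
          rw [DY.symm w z]; exact ENNReal.add_ne_top.mpr ⟨hx, hzw⟩
        exact ne_top_of_le_ne_top hb2 (DY.triangle _ _ _)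
      have hmem : (f x).toReal + (L : ℝ) * (DY.d (i x) z).toReal ∈ A z := ⟨x, hxz, rfl⟩
      have h1 : sInf (A z) ≤ (f x).toReal + (L : ℝ) * (DY.d (i x) z).toReal :=
        csInf_le hbddz hmem
      have htri : (DY.d (i x) z).toReal ≤ (DY.d (i x) w).toReal + (DY.d z w).toReal := by
        rw [← ENNReal.toReal_add hx hzw]
        refine ENNReal.toReal_mono (ENNReal.add_ne_top.mpr ⟨hx, hzw⟩) ?_
        calc DY.d (i x) z ≤ DY.d (i x) w + DY.d w z := DY.triangle _ _ _
          _ = DY.d (i x) w + DY.d z w := by rw [DY.symm w z]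
      have hL' : (0:ℝ) ≤ (L : ℝ) := L.2
      nlinarith
    have := le_csInf hnew key
    linarith
  -- the extension
  refine ⟨fun y =>
    if h : ∃ x, DY.d (i x) y ≠ ∞ then
      if f h.choose = ⊤ then ⊤ else if f h.choose = ⊥ then ⊥
      else ((sInf (A y) : ℝ) : EReal)
    else 0, ?_, ?_⟩
  · -- F (i x) = f x
    intro x
    have hself : DY.d (i x) (i x) ≠ ∞ := by rw [hi, DX.refl]; simp
    have hre : ∃ x', DY.d (i x') (i x) ≠ ∞ := ⟨x, hself⟩
    beta_reduce
    rw [dif_pos hre]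
    set x0 := hre.choose with hx0def
    have hx0 : DY.d (i x0) (i x) ≠ ∞ := hre.choose_spec
    have hdx : DX.d x x0 ≠ ∞ := hcomp hself hx0
    have hdx' : DX.d x0 x ≠ ∞ := by rwa [DX.symm]
    by_cases hft : f x = ⊤
    · rw [if_pos ((hclass hdx).1 hft), hft]
    by_cases hfb : f x = ⊥
    · rw [if_neg, if_pos ((hclass hdx).2.1 hfb), hfb]
      intro h; exact hft ((hclass hdx').1 h)
    · have hx0fin := (hclass hdx).2.2 hft hfb
      rw [if_neg hx0fin.1, if_neg hx0fin.2]
      have hzero : (DY.d (i x) (i x)).toReal = 0 := by rw [hi, DX.refl]; simp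
      have hmem : (f x).toReal ∈ A (i x) := by
        refine ⟨x, hself, ?_⟩
        rw [hzero]; ring
      have hlow : ∀ r ∈ A (i x), (f x).toReal ≤ r := by
        have := hlb (i x) x hself hft hfb
        intro r hr
        have := this r hr
        rw [hzero] at this; linarith
      have : sInf (A (i x)) = (f x).toReal :=
        le_antisymm (csInf_le ⟨_, hlow⟩ hmem) (le_csInf ⟨_, hmem⟩ hlow)
      rw [this, EReal.coe_toReal hft hfb]
  · -- Lipschitz
    intro z w
    by_cases hzw : DY.d z w = ∞
    · rw [hzw, ENNReal.mul_top (by exact_mod_cast hL0.ne' : (L : ℝ≥0∞) ≠ 0)]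
      exact le_top
    by_cases hz : ∃ x, DY.d (i x) z ≠ ∞
    · have hw : ∃ x, DY.d (i x) w ≠ ∞ := by
        obtain ⟨x, hx⟩ := hz
        exact ⟨x, ne_top_of_le_ne_top (ENNReal.add_ne_top.mpr ⟨hx, hzw⟩) (DY.triangle (i x) z w)⟩
      beta_reduce
      rw [dif_pos hz, dif_pos hw]
      set x0 := hz.choose with hx0def
      set x1 := hw.choose with hx1def
      have hx0 : DY.d (i x0) z ≠ ∞ := hz.choose_spec
      have hx1 : DY.d (i x1) w ≠ ∞ := hw.choose_spec
      have hx0w : DY.d (i x0) w ≠ ∞ :=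
        ne_top_of_le_ne_top (ENNReal.add_ne_top.mpr ⟨hx0, hzw⟩) (DY.triangle (i x0) z w)
      have hd01 : DX.d x0 x1 ≠ ∞ := hcomp hx0w hx1
      have hd10 : DX.d x1 x0 ≠ ∞ := by rwa [DX.symm]
      by_cases hft : f x0 = ⊤
      · rw [if_pos hft, if_pos ((hclass hd01).1 hft), eRealDist_self]
        exact zero_le
      by_cases hfb : f x0 = ⊥
      · rw [if_neg hft, if_pos hfb, if_neg, if_pos ((hclass hd01).2.1 hfb), eRealDist_self]
        · exact zero_le
        · intro h; exact hft ((hclass hd10).1 h)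
      · have hx1fin := (hclass hd01).2.2 hft hfb
        rw [if_neg hft, if_neg hfb, if_neg hx1fin.1, if_neg hx1fin.2, eRealDist_coe]
        have hwz : DY.d w z ≠ ∞ := by rwa [DY.symm]
        have h1 := hcmp z w hzw x0 hx0 hft hfb
        have h2 := hcmp w z hwz x1 hx1 hx1fin.1 hx1fin.2
        rw [DY.symm w z] at h2
        have habs2 : |sInf (A z) - sInf (A w)| ≤ (L : ℝ) * (DY.d z w).toReal := by
          rw [abs_sub_le_iff]; constructor <;> linarith
        calc ENNReal.ofReal |sInf (A z) - sInf (A w)|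
            ≤ ENNReal.ofReal ((L : ℝ) * (DY.d z w).toReal) := ENNReal.ofReal_le_ofReal habs2
          _ = (L : ℝ≥0∞) * DY.d z w := by
              rw [ENNReal.ofReal_mul L.coe_nonneg, ENNReal.ofReal_coe_nnreal, ENNReal.ofReal_toReal hzw]
    · have hwn : ¬ ∃ x, DY.d (i x) w ≠ ∞ := by
        rintro ⟨x, hx⟩
        refine hz ⟨x, ne_top_of_le_ne_top ?_ (DY.triangle (i x) w z)⟩
        rw [DY.symm w z]
        exact ENNReal.add_ne_top.mpr ⟨hx, hzw⟩
      beta_reduce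
      rw [dif_neg hz, dif_neg hwn, eRealDist_self]
      exact zero_le


/-- For any isometry `i : X → Y` between distance spaces and any Lipschitz
`f : X → [-∞,∞]`, there is a Lipschitz `F : Y → [-∞,∞]` with `F ∘ i = f` and
`Lip(F) = Lip(f)`. -/
theorem stmt6 {X Y : Type*} (DX : DistSpace X) (DY : DistSpace Y)
    (i : X → Y) (hi : ∀ a b, DY.d (i a) (i b) = DX.d a b)
    (f : X → EReal)
    (hf : ∃ L : ℝ≥0, ∀ x y, eRealDist (f x) (f y) ≤ (L : ℝ≥0∞) * DX.d x y) :
    ∃ F : Y → EReal, (∀ x, F (i x) = f x) ∧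
      (∃ L : ℝ≥0, ∀ z w, eRealDist (F z) (F w) ≤ (L : ℝ≥0∞) * DY.d z w) ∧
      sInf {L : ℝ≥0∞ | ∀ z w, eRealDist (F z) (F w) ≤ L * DY.d z w} =
        sInf {L : ℝ≥0∞ | ∀ x y, eRealDist (f x) (f y) ≤ L * DX.d x y} := by
  classical
  obtain ⟨L0, hL0⟩ := hf
  set Sf := {L : ℝ≥0∞ | ∀ x y, eRealDist (f x) (f y) ≤ L * DX.d x y} with hSf
  have hL0mem : (L0 : ℝ≥0∞) ∈ Sf := hL0
  have hLstar_le : sInf Sf ≤ (L0 : ℝ≥0∞) := sInf_le hL0mem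
  have hLstar_ne : sInf Sf ≠ ∞ := ne_top_of_le_ne_top ENNReal.coe_ne_top hLstar_le
  -- a general fact: the F-set is contained in the f-set
  have hsubset : ∀ F : Y → EReal, (∀ x, F (i x) = f x) →
      {L : ℝ≥0∞ | ∀ z w, eRealDist (F z) (F w) ≤ L * DY.d z w} ⊆ Sf := by
    intro F hF1 L' hL' x y
    have := hL' (i x) (i y)
    rwa [hF1 x, hF1 y, hi] at this
  by_cases hpos : 0 < sInf Sf
  · -- the infimum is attained
    have hmem : sInf Sf ∈ Sf := by
      intro x y
      by_cases hd : DX.d x y = ∞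
      · rw [hd, ENNReal.mul_top hpos.ne']; exact le_top
      by_cases hd0 : DX.d x y = 0
      · rw [hd0, mul_zero]
        have := hL0 x y; rwa [hd0, mul_zero] at this
      · rw [← ENNReal.div_le_iff hd0 hd]
        refine le_sInf fun L' hL' => ?_
        rw [ENNReal.div_le_iff hd0 hd]
        exact hL' x y
    set L := (sInf Sf).toNNReal with hLdef
    have hLcoe : (L : ℝ≥0∞) = sInf Sf := ENNReal.coe_toNNReal hLstar_ne
    have hLpos : 0 < L := by
      rw [← ENNReal.coe_pos, hLcoe]; exact hpos
    obtain ⟨F, hF1, hF2⟩ := mcshane DX DY i hi f L hLpos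
      (fun x y => by rw [hLcoe]; exact hmem x y)
    refine ⟨F, hF1, ⟨L, hF2⟩, le_antisymm ?_ ?_⟩
    · calc sInf {L' : ℝ≥0∞ | ∀ z w, eRealDist (F z) (F w) ≤ L' * DY.d z w}
          ≤ (L : ℝ≥0∞) := sInf_le hF2
        _ = sInf Sf := hLcoe
    · exact sInf_le_sInf (hsubset F hF1)
  · have hzero : sInf Sf = 0 := by
      rcases (show (0:ℝ≥0∞) ≤ sInf Sf from zero_le).lt_or_eq with h | h
      · exact absurd h hpos
      · exact h.symm
    by_cases h0 : (0 : ℝ≥0∞) ∈ Sf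
    · -- f is constant
      have hconst : ∀ x y, f x = f y := fun x y =>
        eRealDist_eq_zero (le_antisymm (by simpa using h0 x y) (zero_le))
      refine ⟨fun _ => if hX : Nonempty X then f hX.some else 0, ?_, ⟨0, ?_⟩, ?_⟩
      · intro x
        rw [dif_pos ⟨x⟩]
        exact hconst _ x
      · intro z w; rw [eRealDist_self]; exact zero_le
      · rw [hzero]
        refine le_antisymm ?_ (zero_le)
        refine sInf_le fun z w => ?_
        rw [eRealDist_self]; exact zero_le
    · -- f is constant on finite-distance components but not globally
      have hcc : ∀ x y, DX.d x y ≠ ∞ → f x = f y := by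
        intro x y hd
        apply eRealDist_eq_zero
        refine le_antisymm ?_ (zero_le)
        by_contra hne
        have he : 0 < eRealDist (f x) (f y) := pos_iff_ne_zero.mpr fun h => hne (h ▸ le_rfl)
        by_cases hd0 : DX.d x y = 0
        · have := hL0 x y; rw [hd0, mul_zero] at this
          exact hne this
        · have hdiv : 0 < eRealDist (f x) (f y) / DX.d x y :=
            ENNReal.div_pos he.ne' hd
          obtain ⟨L', hL'mem, hL'lt⟩ := (sInf_lt_iff).mp (hzero ▸ hdiv)
          have h1 : eRealDist (f x) (f y) ≤ L' * DX.d x y := hL'mem x y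
          have h2 : L' * DX.d x y < eRealDist (f x) (f y) :=
            ENNReal.mul_lt_of_lt_div hL'lt
          exact absurd (h1.trans_lt h2) (lt_irrefl _)
      refine ⟨fun y => if h : ∃ x, DY.d (i x) y ≠ ∞ then f h.choose else 0, ?_, ?_, ?_⟩
      · intro x
        have hself : DY.d (i x) (i x) ≠ ∞ := by rw [hi, DX.refl]; simp
        have hre : ∃ x', DY.d (i x') (i x) ≠ ∞ := ⟨x, hself⟩
        beta_reduce
        rw [dif_pos hre]
        refine hcc _ _ ?_
        rw [← hi]
        exact ne_top_of_le_ne_top (ENNReal.add_ne_top.mpr ⟨hre.choose_spec, hself⟩)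
          le_self_add
      · -- Lipschitz with constant 1 (indeed any positive constant)
        refine ⟨1, fun z w => ?_⟩
        by_cases hzw : DY.d z w = ∞
        · rw [hzw, ENNReal.mul_top (by norm_num)]; exact le_top
        beta_reduce
        by_cases hz : ∃ x, DY.d (i x) z ≠ ∞
        · have hw : ∃ x, DY.d (i x) w ≠ ∞ := by
            obtain ⟨x, hx⟩ := hz
            exact ⟨x, ne_top_of_le_ne_top (ENNReal.add_ne_top.mpr ⟨hx, hzw⟩)
              (DY.triangle (i x) z w)⟩
          rw [dif_pos hz, dif_pos hw]
          have hfeq : f hz.choose = f hw.choose := by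
            refine hcc _ _ ?_
            rw [← hi]
            have t1 : DY.d (i hz.choose) w ≠ ∞ :=
              ne_top_of_le_ne_top (ENNReal.add_ne_top.mpr ⟨hz.choose_spec, hzw⟩)
                (DY.triangle (i hz.choose) z w)
            have t2 : DY.d w (i hw.choose) ≠ ∞ := by
              rw [DY.symm]; exact hw.choose_spec
            exact ne_top_of_le_ne_top (ENNReal.add_ne_top.mpr ⟨t1, t2⟩)
              (DY.triangle (i hz.choose) w (i hw.choose))
          rw [hfeq, eRealDist_self]
          exact zero_le
        · have hwn : ¬ ∃ x, DY.d (i x) w ≠ ∞ := by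
            rintro ⟨x, hx⟩
            refine hz ⟨x, ne_top_of_le_ne_top ?_ (DY.triangle (i x) w z)⟩
            rw [DY.symm w z]
            exact ENNReal.add_ne_top.mpr ⟨hx, hzw⟩
          rw [dif_neg hz, dif_neg hwn, eRealDist_self]
          exact zero_le
      · rw [hzero]
        refine le_antisymm ?_ (zero_le)
        refine ENNReal.le_of_forall_pos_le_add fun ε hε _ => ?_
        rw [zero_add]
        refine sInf_le fun z w => ?_
        by_cases hzw : DY.d z w = ∞
        · rw [hzw, ENNReal.mul_top (by exact_mod_cast hε.ne' : (ε : ℝ≥0∞) ≠ 0)]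
          exact le_top
        beta_reduce
        by_cases hz : ∃ x, DY.d (i x) z ≠ ∞
        · have hw : ∃ x, DY.d (i x) w ≠ ∞ := by
            obtain ⟨x, hx⟩ := hz
            exact ⟨x, ne_top_of_le_ne_top (ENNReal.add_ne_top.mpr ⟨hx, hzw⟩)
              (DY.triangle (i x) z w)⟩
          rw [dif_pos hz, dif_pos hw]
          have hfeq : f hz.choose = f hw.choose := by
            refine hcc _ _ ?_
            rw [← hi]
            have t1 : DY.d (i hz.choose) w ≠ ∞ :=
              ne_top_of_le_ne_top (ENNReal.add_ne_top.mpr ⟨hz.choose_spec, hzw⟩)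
                (DY.triangle (i hz.choose) z w)
            have t2 : DY.d w (i hw.choose) ≠ ∞ := by
              rw [DY.symm]; exact hw.choose_spec
            exact ne_top_of_le_ne_top (ENNReal.add_ne_top.mpr ⟨t1, t2⟩)
              (DY.triangle (i hz.choose) w (i hw.choose))
          rw [hfeq, eRealDist_self]
          exact zero_le
        · have hwn : ¬ ∃ x, DY.d (i x) w ≠ ∞ := by
            rintro ⟨x, hx⟩
            refine hz ⟨x, ne_top_of_le_ne_top ?_ (DY.triangle (i x) w z)⟩
            rw [DY.symm w z]
            exact ENNReal.add_ne_top.mpr ⟨hx, hzw⟩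
          rw [dif_neg hz, dif_neg hwn, eRealDist_self]
          exact zero_le
end

section
/- Every sequence (x_n)_{n∈ℕ} in a distance space (X,d_X) contains a subsequence which is either Cauchy or ε-separated for some ε > 0 (i.e., all pairwise distances of distinct terms are at least ε). -/
open scoped ENNReal

/-- Key lemma: if no separated subsequence exists, every infinite index set has an
infinite subset with pairwise distances < ε. -/
abbrev NoSep {X : Type*} (D : DistSpace X) (x : ℕ → X) : Prop :=
  ¬ ∃ ε : ℝ≥0∞, 0 < ε ∧ ε ≠ ∞ ∧ ∃ φ : ℕ → ℕ, StrictMono φ ∧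
      ∀ i j, i ≠ j → ε ≤ D.d (x (φ i)) (x (φ j))

lemma keyA {X : Type*} (D : DistSpace X) (x : ℕ → X) (H : NoSep D x)
    (S : Set ℕ) (hS : S.Infinite) (ε : ℝ≥0∞) (hε : 0 < ε) (hεt : ε ≠ ∞) :
    ∃ T, T ⊆ S ∧ T.Infinite ∧ ∀ i ∈ T, ∀ j ∈ T, D.d (x i) (x j) < ε := by
  set ε' : ℝ≥0∞ := ε / 2 with hε'def
  have hε'pos : 0 < ε' := ENNReal.half_pos hε.ne'
  have hε't : ε' ≠ ∞ := by
    simp [hε'def, ENNReal.div_eq_top, hεt]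
  -- Zorn to get a maximal ε'-separated subset of S
  obtain ⟨M, -, hMmax⟩ := zorn_subset_nonempty
      {M : Set ℕ | M ⊆ S ∧ ∀ i ∈ M, ∀ j ∈ M, i ≠ j → ε' ≤ D.d (x i) (x j)}
      (fun c hc hchain _ => by
        refine ⟨⋃₀ c, ⟨?_, ?_⟩, fun s hs => Set.subset_sUnion_of_mem hs⟩
        · exact Set.sUnion_subset fun s hs => (hc hs).1
        · rintro i ⟨s, hs, hi⟩ j ⟨t, ht, hj⟩ hij
          rcases hchain.total hs ht with h | h
          · exact (hc ht).2 i (h hi) j hj hij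
          · exact (hc hs).2 i hi j (h hj) hij)
      ∅ ⟨Set.empty_subset _, by simp⟩
  obtain ⟨⟨hMS, hMsep⟩, hmax⟩ := hMmax
  -- M is finite
  have hMfin : M.Finite := by
    by_contra hMinf
    have hMinf' : {n | n ∈ M}.Infinite := hMinf
    refine H ⟨ε', hε'pos, hε't, Nat.nth (· ∈ M), Nat.nth_strictMono hMinf', ?_⟩
    intro i j hij
    exact hMsep _ (Nat.nth_mem_of_infinite hMinf' i) _ (Nat.nth_mem_of_infinite hMinf' j)
      (((Nat.nth_strictMono hMinf').injective).ne hij)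
  -- every s ∈ S is within ε' of some m ∈ M
  have hcover : ∀ s ∈ S, ∃ m ∈ M, D.d (x s) (x m) < ε' := by
    intro s hs
    by_cases hsM : s ∈ M
    · exact ⟨s, hsM, by rw [D.refl]; exact hε'pos⟩
    by_contra hno
    push_neg at hno
    have hins : insert s M ∈
        {M : Set ℕ | M ⊆ S ∧ ∀ i ∈ M, ∀ j ∈ M, i ≠ j → ε' ≤ D.d (x i) (x j)} := by
      constructor
      · exact Set.insert_subset hs hMS
      · rintro i (rfl | hi) j (rfl | hj) hij
        · exact absurd rfl hij
        · exact hno j hj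
        · exact (D.symm (x i) (x j)) ▸ hno i hi
        · exact hMsep i hi j hj hij
    exact hsM (hmax hins (Set.subset_insert s M) (Set.mem_insert s M))
  -- pigeonhole: some m ∈ M attracts infinitely many s ∈ S
  have hSsub : S ⊆ ⋃ m ∈ M, {s ∈ S | D.d (x s) (x m) < ε'} := by
    intro s hs
    obtain ⟨m, hm, hd⟩ := hcover s hs
    exact Set.mem_biUnion hm ⟨hs, hd⟩
  have hex : ∃ m ∈ M, {s ∈ S | D.d (x s) (x m) < ε'}.Infinite := by
    by_contra hno
    push_neg at hno
    exact hS ((hMfin.biUnion hno).subset hSsub)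
  obtain ⟨m, hm, hTinf⟩ := hex
  refine ⟨{s ∈ S | D.d (x s) (x m) < ε'}, fun s hs => hs.1, hTinf, ?_⟩
  rintro i ⟨-, hi⟩ j ⟨-, hj⟩
  calc D.d (x i) (x j) ≤ D.d (x i) (x m) + D.d (x m) (x j) := D.triangle _ _ _
    _ < ε' + ε' := ENNReal.add_lt_add hi ((D.symm (x m) (x j)) ▸ hj)
    _ = ε := ENNReal.add_halves ε

lemma hpow_aux (n : ℕ) : (0 : ℝ≥0∞) < 2⁻¹ ^ n ∧ ((2:ℝ≥0∞)⁻¹ ^ n) ≠ ∞ :=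
  ⟨ENNReal.pow_pos (by simp) n, ENNReal.pow_ne_top (by simp)⟩

/-- The nested chain of infinite index sets. -/
noncomputable def chain {X : Type*} (D : DistSpace X) (x : ℕ → X)
    (H : NoSep D x) : ℕ → {S : Set ℕ // S.Infinite}
  | 0 => ⟨Set.univ, Set.infinite_univ⟩
  | n + 1 =>
    ⟨(keyA D x H (chain D x H n).1 (chain D x H n).2 (2⁻¹ ^ n)
        (hpow_aux n).1 (hpow_aux n).2).choose,
     (keyA D x H (chain D x H n).1 (chain D x H n).2 (2⁻¹ ^ n)
        (hpow_aux n).1 (hpow_aux n).2).choose_spec.2.1⟩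

lemma chain_subset {X : Type*} (D : DistSpace X) (x : ℕ → X) (H : NoSep D x) (n : ℕ) :
    (chain D x H (n + 1)).1 ⊆ (chain D x H n).1 :=
  (keyA D x H (chain D x H n).1 (chain D x H n).2 (2⁻¹ ^ n)
    (hpow_aux n).1 (hpow_aux n).2).choose_spec.1

lemma chain_small {X : Type*} (D : DistSpace X) (x : ℕ → X) (H : NoSep D x) (n : ℕ) :
    ∀ i ∈ (chain D x H (n + 1)).1, ∀ j ∈ (chain D x H (n + 1)).1,
      D.d (x i) (x j) < 2⁻¹ ^ n :=
  (keyA D x H (chain D x H n).1 (chain D x H n).2 (2⁻¹ ^ n)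
    (hpow_aux n).1 (hpow_aux n).2).choose_spec.2.2

lemma chain_mono {X : Type*} (D : DistSpace X) (x : ℕ → X) (H : NoSep D x) {k m : ℕ} (h : k ≤ m) :
    (chain D x H m).1 ⊆ (chain D x H k).1 := by
  induction m with
  | zero => rw [Nat.le_zero.mp h]
  | succ m ih =>
    rcases Nat.lt_or_ge k (m + 1) with h' | h'
    · exact (chain_subset D x H m).trans (ih (Nat.lt_succ_iff.mp h'))
    · rw [le_antisymm h h']

/-- The diagonal subsequence. -/
noncomputable def diag {X : Type*} (D : DistSpace X) (x : ℕ → X) (H : NoSep D x) : ℕ → ℕ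
  | 0 => ((chain D x H 0).2.exists_gt 0).choose
  | n + 1 => ((chain D x H (n + 1)).2.exists_gt (diag D x H n)).choose

lemma diag_mem {X : Type*} (D : DistSpace X) (x : ℕ → X) (H : NoSep D x) (n : ℕ) :
    diag D x H n ∈ (chain D x H n).1 := by
  cases n with
  | zero => exact ((chain D x H 0).2.exists_gt 0).choose_spec.1
  | succ n => exact ((chain D x H (n + 1)).2.exists_gt (diag D x H n)).choose_spec.1

lemma diag_strictMono {X : Type*} (D : DistSpace X) (x : ℕ → X) (H : NoSep D x) :
    StrictMono (diag D x H) :=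
  strictMono_nat_of_lt_succ fun n =>
    ((chain D x H (n + 1)).2.exists_gt (diag D x H n)).choose_spec.2

/-- Every sequence in a distance space contains a subsequence which is either
Cauchy or `ε`-separated for some `ε ∈ (0,∞)`. -/
theorem stmt11 {X : Type*} (D : DistSpace X) (x : ℕ → X) :
    ∃ φ : ℕ → ℕ, StrictMono φ ∧
      ((∀ ε : ℝ≥0∞, 0 < ε → ε ≠ ∞ →
          ∃ N, ∀ m ≥ N, ∀ k ≥ N, D.d (x (φ m)) (x (φ k)) < ε) ∨
       (∃ ε : ℝ≥0∞, 0 < ε ∧ ε ≠ ∞ ∧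
          ∀ i j, i ≠ j → ε ≤ D.d (x (φ i)) (x (φ j)))) := by
  by_cases H : ∃ ε : ℝ≥0∞, 0 < ε ∧ ε ≠ ∞ ∧ ∃ φ : ℕ → ℕ, StrictMono φ ∧
      ∀ i j, i ≠ j → ε ≤ D.d (x (φ i)) (x (φ j))
  · obtain ⟨ε, hε, hεt, φ, hφ, hsep⟩ := H
    exact ⟨φ, hφ, Or.inr ⟨ε, hε, hεt, hsep⟩⟩
  refine ⟨diag D x H, diag_strictMono D x H, Or.inl ?_⟩
  intro ε hε hεt
  obtain ⟨n, hn⟩ := ENNReal.exists_inv_two_pow_lt hε.ne'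
  refine ⟨n + 1, fun m hm k hk => ?_⟩
  have hmem : ∀ l ≥ n + 1, diag D x H l ∈ (chain D x H (n + 1)).1 := fun l hl =>
    chain_mono D x H hl (diag_mem D x H l)
  exact lt_trans (chain_small D x H n _ (hmem m hm) _ (hmem k hk)) hn
end

section
/- Let k ≤ m be nonzero finite cardinals, ε > 0, and 𝒰 = ⋃_{i<m} 𝒰_i a cover of a distance space X such that each family 𝒰_i has minimal inter-set distance at least ε, and for every k-element subset S ⊆ {0,…,m−1}, the union ⋃_{i∈S} ⋃𝒰_i equals X. Then there exists a cover 𝒱 = ⋃_{i<m+1} 𝒱_i of X such that: (1) each 𝒱_i has minimal inter-set distance at least ε/3; (2) mesh(𝒱) ≤ mesh(𝒰) + 2ε/3; (3) X = ⋃_{i∈S} ⋃𝒱_i for every k-element subset S ⊆ {0,…,m}. -/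
open scoped ENNReal

/-- `dist(A,B) = inf({∞} ∪ {d a b : a ∈ A, b ∈ B})`. -/
noncomputable def setDist {X : Type*} (D : DistSpace X) (A B : Set X) : ℝ≥0∞ :=
  ⨅ a ∈ A, ⨅ b ∈ B, D.d a b

/-- The diameter of a subset (`0` for the empty set). -/
noncomputable def ediam {X : Type*} (D : DistSpace X) (A : Set X) : ℝ≥0∞ :=
  ⨆ x ∈ A, ⨆ y ∈ A, D.d x y

/-- `mesh(𝒰)` : the supremum of the diameters of the members of `𝒰`. -/
noncomputable def mesh {X : Type*} (D : DistSpace X) (𝒰 : Set (Set X)) : ℝ≥0∞ :=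
  ⨆ U ∈ 𝒰, ediam D U

/-- The minimal inter-set distance of a family of sets. -/
noncomputable def sep {X : Type*} (D : DistSpace X) (𝒰 : Set (Set X)) : ℝ≥0∞ :=
  ⨅ U ∈ 𝒰, ⨅ V ∈ 𝒰, ⨅ _ : U ≠ V, setDist D U V

section KolmAux

variable {X : Type*}

lemma sep_ge_elim (D : DistSpace X) {𝒜 : Set (Set X)} {ε : ℝ≥0∞} (h : ε ≤ sep D 𝒜)
    {U V : Set X} {a b : X} (hU : U ∈ 𝒜) (hV : V ∈ 𝒜) (hUV : U ≠ V)
    (ha : a ∈ U) (hb : b ∈ V) : ε ≤ D.d a b := by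
  refine h.trans ?_
  calc sep D 𝒜 ≤ setDist D U V :=
        iInf₂_le_of_le U hU <| iInf₂_le_of_le V hV <| iInf_le _ hUV
    _ ≤ D.d a b := iInf₂_le_of_le a ha <| iInf₂_le_of_le b hb le_rfl

lemma le_sep (D : DistSpace X) {𝒜 : Set (Set X)} {ε : ℝ≥0∞}
    (h : ∀ U ∈ 𝒜, ∀ V ∈ 𝒜, U ≠ V → ∀ a ∈ U, ∀ b ∈ V, ε ≤ D.d a b) : ε ≤ sep D 𝒜 := by
  simp only [sep, setDist, le_iInf_iff]
  exact h

lemma ediam_le' (D : DistSpace X) {A : Set X} {c : ℝ≥0∞}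
    (h : ∀ x ∈ A, ∀ y ∈ A, D.d x y ≤ c) : ediam D A ≤ c := by
  simp only [ediam, iSup_le_iff]
  exact h

lemma d_le_ediam (D : DistSpace X) {A : Set X} {x y : X} (hx : x ∈ A) (hy : y ∈ A) :
    D.d x y ≤ ediam D A :=
  le_iSup₂_of_le x hx <| le_iSup₂_of_le y hy le_rfl

lemma ediam_mono (D : DistSpace X) {A B : Set X} (h : A ⊆ B) : ediam D A ≤ ediam D B :=
  ediam_le' D fun x hx y hy => d_le_ediam D (h hx) (h hy)

lemma ediam_le_mesh (D : DistSpace X) {𝒜 : Set (Set X)} {A : Set X} (h : A ∈ 𝒜) :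
    ediam D A ≤ mesh D 𝒜 :=
  le_iSup₂_of_le A h le_rfl

lemma mesh_le (D : DistSpace X) {𝒜 : Set (Set X)} {c : ℝ≥0∞}
    (h : ∀ A ∈ 𝒜, ediam D A ≤ c) : mesh D 𝒜 ≤ c := iSup₂_le h

lemma far (D : DistSpace X) {ε : ℝ≥0∞} {u v x y : X} (h : ε ≤ D.d u v)
    (hx : D.d u x < ε / 3) (hy : D.d v y < ε / 3) : ε / 3 ≤ D.d x y := by
  by_contra hc
  push_neg at hc
  have h1 : D.d u v ≤ D.d u x + (D.d x y + D.d y v) :=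
    (D.triangle u x v).trans (add_le_add_right (D.triangle x y v) _)
  have h2 : D.d u x + (D.d x y + D.d y v) < ε / 3 + (ε / 3 + ε / 3) := by
    rw [D.symm y v]
    exact ENNReal.add_lt_add hx (ENNReal.add_lt_add hc hy)
  have h3 : ε / 3 + (ε / 3 + ε / 3) = ε := by
    rw [← add_assoc]; exact ENNReal.add_thirds ε
  exact absurd (h.trans_lt (h1.trans_lt (h2.trans_le h3.le))) (lt_irrefl ε)

/-- The open `t`-neighborhood of a set. -/
def nbhd (D : DistSpace X) (t : ℝ≥0∞) (U : Set X) : Set X := {y | ∃ u ∈ U, D.d u y < t}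

open Classical in
/-- The set of colors `i` such that `x` is `t`-close to `⋃₀ 𝒰 i`. -/
noncomputable def nearSet (D : DistSpace X) (t : ℝ≥0∞) {m : ℕ} (𝒰 : Fin m → Set (Set X))
    (x : X) : Finset (Fin m) :=
  Finset.univ.filter fun i => ∃ U ∈ 𝒰 i, x ∈ nbhd D t U

open Classical in
/-- The set of colors `i` such that `x ∈ ⋃₀ 𝒰 i`. -/
noncomputable def actSet {m : ℕ} (𝒰 : Fin m → Set (Set X)) (x : X) : Finset (Fin m) :=
  Finset.univ.filter fun i => x ∈ ⋃₀ 𝒰 i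

/-- The set of "deficient" points. -/
def Wset (D : DistSpace X) (t : ℝ≥0∞) (k : ℕ) {m : ℕ} (𝒰 : Fin m → Set (Set X)) : Set X :=
  {x | (nearSet D t 𝒰 x).card ≤ m - k + 1}

/-- The extra family. -/
def lastFam (D : DistSpace X) (t : ℝ≥0∞) (k : ℕ) {m : ℕ} (𝒰 : Fin m → Set (Set X)) :
    Set (Set X) :=
  {V | ∃ c : Finset (Fin m), ∃ τ : Fin m → Set X, (∀ i ∈ c, τ i ∈ 𝒰 i) ∧
    V = {x | x ∈ Wset D t k 𝒰 ∧ nearSet D t 𝒰 x = c ∧ ∀ i ∈ c, x ∈ τ i}}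

end KolmAux

/-- Kolmogorov's trick: from a cover `𝒰 = ⋃_{i<m} 𝒰_i` with `sep(𝒰_i) ≥ ε` such
that any `k` of the pieces already cover `X`, one obtains a cover indexed by
`m+1` with separation `≥ ε/3`, mesh increased by at most `2ε/3`, and any `k`
pieces covering `X`. -/
theorem stmt14 {X : Type*} (D : DistSpace X) (k m : ℕ) (hk : 0 < k) (hkm : k ≤ m)
    (ε : ℝ≥0∞) (hε : 0 < ε) (hεt : ε ≠ ∞)
    (𝒰 : Fin m → Set (Set X))
    (hsep : ∀ i, ε ≤ sep D (𝒰 i))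
    (hcov : ∀ S : Finset (Fin m), S.card = k → (⋃ i ∈ S, ⋃₀ 𝒰 i) = Set.univ) :
    ∃ 𝒱 : Fin (m + 1) → Set (Set X),
      (∀ i, ε / 3 ≤ sep D (𝒱 i)) ∧
      mesh D (⋃ i, 𝒱 i) ≤ mesh D (⋃ i, 𝒰 i) + 2 * ε / 3 ∧
      (∀ S : Finset (Fin (m + 1)), S.card = k → (⋃ i ∈ S, ⋃₀ 𝒱 i) = Set.univ) := by
  classical
  have ht0 : 0 < ε / 3 := ENNReal.div_pos hε.ne' (by norm_num)
  -- basic facts about actSet and nearSet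
  have hAC : ∀ x, actSet 𝒰 x ⊆ nearSet D (ε / 3) 𝒰 x := by
    intro x i hi
    simp only [actSet, Finset.mem_filter, Finset.mem_univ, true_and, Set.mem_sUnion] at hi
    obtain ⟨U, hU, hxU⟩ := hi
    simp only [nearSet, Finset.mem_filter, Finset.mem_univ, true_and]
    exact ⟨U, hU, x, hxU, by rw [D.refl]; exact ht0⟩
  have hAcard : ∀ x, m - k + 1 ≤ (actSet 𝒰 x).card := by
    intro x
    by_contra hc
    push_neg at hc
    have hcompl : k ≤ (Finset.univ \ actSet 𝒰 x).card := by
      have h1 := Finset.card_sdiff_of_subset (Finset.subset_univ (actSet 𝒰 x))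
      have hu : (Finset.univ : Finset (Fin m)).card = m := by simp
      omega
    obtain ⟨S, hS, hScard⟩ := Finset.exists_subset_card_eq hcompl
    have hxcov : x ∈ (⋃ i ∈ S, ⋃₀ 𝒰 i) := (hcov S hScard) ▸ Set.mem_univ x
    simp only [Set.mem_iUnion] at hxcov
    obtain ⟨i, hiS, hxi⟩ := hxcov
    have h2 := hS hiS
    simp only [Finset.mem_sdiff, actSet, Finset.mem_filter, Finset.mem_univ, true_and] at h2
    exact h2 hxi
  have hW_eq : ∀ x ∈ Wset D (ε / 3) k 𝒰, actSet 𝒰 x = nearSet D (ε / 3) 𝒰 x := by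
    intro x hx
    exact Finset.eq_of_subset_of_card_le (hAC x) (le_trans hx (hAcard x))
  -- the new families
  refine ⟨fun i => if h : (i : ℕ) < m then nbhd D (ε / 3) '' 𝒰 ⟨i, h⟩
      else lastFam D (ε / 3) k 𝒰, ?_, ?_, ?_⟩
  · -- separation
    intro i
    by_cases h : (i : ℕ) < m
    · simp only [dif_pos h]
      apply le_sep
      rintro _ ⟨U, hU, rfl⟩ _ ⟨U', hU', rfl⟩ hne x hx y hy
      have hUU' : U ≠ U' := by rintro rfl; exact hne rfl
      obtain ⟨u, hu, hux⟩ := hx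
      obtain ⟨u', hu', huy⟩ := hy
      exact far D (sep_ge_elim D (hsep ⟨i, h⟩) hU hU' hUU' hu hu') hux huy
    · simp only [dif_neg h]
      apply le_sep
      rintro V hV V' hV' hne x hx y hy
      obtain ⟨c, τ, hτ, rfl⟩ := hV
      obtain ⟨c', τ', hτ', rfl⟩ := hV'
      obtain ⟨hxW, hxc, hxτ⟩ := hx
      obtain ⟨hyW, hyc, hyτ⟩ := hy
      by_cases hcc : c = c'
      · subst hcc
        by_cases hiff : ∀ j ∈ c, τ j = τ' j
        · exfalso
          apply hne
          ext z
          simp only [Set.mem_setOf_eq]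
          constructor
          · rintro ⟨h1, h2, h3⟩
            exact ⟨h1, h2, fun j hj => (hiff j hj) ▸ h3 j hj⟩
          · rintro ⟨h1, h2, h3⟩
            exact ⟨h1, h2, fun j hj => (hiff j hj).symm ▸ h3 j hj⟩
        · push_neg at hiff
          obtain ⟨j, hjc, hne'⟩ := hiff
          have hε3 : ε / 3 ≤ ε := by
            calc ε / 3 ≤ ε / 1 := by gcongr <;> norm_num
              _ = ε := by simp
          exact hε3.trans
            (sep_ge_elim D (hsep j) (hτ j hjc) (hτ' j hjc) hne' (hxτ j hjc) (hyτ j hjc))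
      · have hdiff : ∃ j, (j ∈ c ∧ j ∉ c') ∨ (j ∈ c' ∧ j ∉ c) := by
          by_contra hno
          push_neg at hno
          apply hcc
          ext j
          exact ⟨(hno j).1, (hno j).2⟩
        obtain ⟨j, hj | hj⟩ := hdiff
        · have h1 : x ∈ τ j := hxτ j hj.1
          have h2 : j ∉ nearSet D (ε / 3) 𝒰 y := hyc ▸ hj.2
          have h3 : ¬ (∃ u ∈ τ j, D.d u y < ε / 3) := by
            intro hex
            refine h2 ?_
            simp only [nearSet, Finset.mem_filter, Finset.mem_univ, true_and]
            exact ⟨τ j, hτ j hj.1, hex⟩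
          push_neg at h3
          exact h3 x h1
        · have h1 : y ∈ τ' j := hyτ j hj.1
          have h2 : j ∉ nearSet D (ε / 3) 𝒰 x := hxc ▸ hj.2
          have h3 : ¬ (∃ u ∈ τ' j, D.d u x < ε / 3) := by
            intro hex
            refine h2 ?_
            simp only [nearSet, Finset.mem_filter, Finset.mem_univ, true_and]
            exact ⟨τ' j, hτ' j hj.1, hex⟩
          push_neg at h3
          rw [D.symm]
          exact h3 y h1
  · -- mesh
    apply mesh_le
    intro V hV
    simp only [Set.mem_iUnion] at hV
    obtain ⟨i, hVi⟩ := hV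
    by_cases h : (i : ℕ) < m
    · simp only [dif_pos h] at hVi
      obtain ⟨U, hU, rfl⟩ := hVi
      have hUm : ediam D U ≤ mesh D (⋃ i, 𝒰 i) :=
        ediam_le_mesh D (Set.mem_iUnion.2 ⟨_, hU⟩)
      have hdiam : ediam D (nbhd D (ε / 3) U) ≤ ediam D U + 2 * ε / 3 := by
        apply ediam_le' D
        rintro x ⟨u, hu, hux⟩ y ⟨v, hv, hvy⟩
        have h23 : (2 : ℝ≥0∞) * ε / 3 = ε / 3 + ε / 3 := by
          rw [two_mul, ENNReal.add_div]
        calc D.d x y ≤ D.d x u + (D.d u v + D.d v y) :=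
              (D.triangle x u y).trans (add_le_add_right (D.triangle u v y) _)
          _ ≤ ε / 3 + (ediam D U + ε / 3) := by
              refine add_le_add ?_ (add_le_add ?_ hvy.le)
              · rw [D.symm x u]; exact hux.le
              · exact d_le_ediam D hu hv
          _ = ediam D U + 2 * ε / 3 := by rw [h23]; ring
      exact hdiam.trans (add_le_add_left hUm _)
    · simp only [dif_neg h] at hVi
      obtain ⟨c, τ, hτ, rfl⟩ := hVi
      rcases Set.eq_empty_or_nonempty
          {x | x ∈ Wset D (ε / 3) k 𝒰 ∧ nearSet D (ε / 3) 𝒰 x = c ∧ ∀ i ∈ c, x ∈ τ i} with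
        he | ⟨x, hxW, hxc, hxτ⟩
      · rw [he]
        simp [ediam]
      · have hc1 : c.Nonempty := by
          rw [← Finset.card_pos]
          have h1 := hAcard x
          rw [hW_eq x hxW, hxc] at h1
          omega
        obtain ⟨i0, hi0⟩ := hc1
        calc ediam D {x | x ∈ Wset D (ε / 3) k 𝒰 ∧ nearSet D (ε / 3) 𝒰 x = c ∧
                ∀ i ∈ c, x ∈ τ i}
            ≤ ediam D (τ i0) := ediam_mono D fun z hz => hz.2.2 i0 hi0
          _ ≤ mesh D (⋃ i, 𝒰 i) := ediam_le_mesh D (Set.mem_iUnion.2 ⟨i0, hτ i0 hi0⟩)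
          _ ≤ mesh D (⋃ i, 𝒰 i) + 2 * ε / 3 := le_self_add
  · -- coverage
    intro S hScard
    ext x
    simp only [Set.mem_iUnion, Set.mem_univ, iff_true]
    by_cases hm : Fin.last m ∈ S
    · by_cases hxW : x ∈ Wset D (ε / 3) k 𝒰
      · refine ⟨Fin.last m, hm, ?_⟩
        simp only [dif_neg (show ¬((Fin.last m : ℕ) < m) by rw [Fin.val_last]; exact lt_irrefl m)]
        set τ : Fin m → Set X := fun i =>
          if h : ∃ U, U ∈ 𝒰 i ∧ x ∈ U then h.choose else ∅ with hτdef
        have hτmem : ∀ i ∈ nearSet D (ε / 3) 𝒰 x, τ i ∈ 𝒰 i ∧ x ∈ τ i := by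
          intro i hi
          have hx' : ∃ U, U ∈ 𝒰 i ∧ x ∈ U := by
            have h1 : i ∈ actSet 𝒰 x := (hW_eq x hxW) ▸ hi
            simpa [actSet, Set.mem_sUnion] using h1
          rw [hτdef]
          simp only [dif_pos hx']
          exact hx'.choose_spec
        refine Set.mem_sUnion.2 ⟨{z | z ∈ Wset D (ε / 3) k 𝒰 ∧
            nearSet D (ε / 3) 𝒰 z = nearSet D (ε / 3) 𝒰 x ∧
            ∀ i ∈ nearSet D (ε / 3) 𝒰 x, z ∈ τ i}, ?_, hxW, rfl, fun i hi => (hτmem i hi).2⟩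
        exact ⟨nearSet D (ε / 3) 𝒰 x, τ, fun i hi => (hτmem i hi).1, rfl⟩
      · have hCx : m - k + 2 ≤ (nearSet D (ε / 3) 𝒰 x).card := by
          simp only [Wset, Set.mem_setOf_eq, not_le] at hxW
          omega
        set T : Finset (Fin m) := Finset.univ.filter (fun j => j.castSucc ∈ S) with hTdef
        have himg : S.erase (Fin.last m) ⊆ T.image Fin.castSucc := by
          intro s hs
          rw [Finset.mem_erase] at hs
          have hlt : (s : ℕ) < m := by
            have h1 := s.isLt
            have h2 : (s : ℕ) ≠ m := fun h => hs.1 (Fin.ext (by simp [h]))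
            omega
          refine Finset.mem_image.2 ⟨⟨s, hlt⟩, ?_, Fin.ext rfl⟩
          rw [hTdef]
          simp only [Finset.mem_filter, Finset.mem_univ, true_and]
          have : (⟨(s : ℕ), hlt⟩ : Fin m).castSucc = s := Fin.ext rfl
          rw [this]
          exact hs.2
        have hT : k - 1 ≤ T.card := by
          have h1 := Finset.card_le_card himg
          have h2 := Finset.card_image_le (f := Fin.castSucc) (s := T)
          have h3 : (S.erase (Fin.last m)).card = k - 1 := by
            rw [Finset.card_erase_of_mem hm, hScard]
          omega
        have hint : (nearSet D (ε / 3) 𝒰 x ∩ T).Nonempty := by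
          rw [← Finset.card_pos]
          have h4 := Finset.card_union_add_card_inter (nearSet D (ε / 3) 𝒰 x) T
          have h5 : (nearSet D (ε / 3) 𝒰 x ∪ T).card ≤ m :=
            le_trans (Finset.card_le_univ _) (by simp)
          omega
        obtain ⟨i, hi⟩ := hint
        rw [Finset.mem_inter] at hi
        have hnear : ∃ U ∈ 𝒰 i, x ∈ nbhd D (ε / 3) U := by
          have := hi.1
          simpa [nearSet] using this
        obtain ⟨U, hU, hxU⟩ := hnear
        have hiS : i.castSucc ∈ S := by
          have := hi.2
          rw [hTdef] at this
          simpa using this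
        refine ⟨i.castSucc, hiS, ?_⟩
        have hlt : ((i.castSucc : Fin (m + 1)) : ℕ) < m := by simp
        simp only [dif_pos hlt]
        have heq : (⟨((i.castSucc : Fin (m + 1)) : ℕ), hlt⟩ : Fin m) = i := Fin.ext (by simp)
        rw [heq]
        exact Set.mem_sUnion.2 ⟨nbhd D (ε / 3) U, Set.mem_image_of_mem _ hU, hxU⟩
    · set T : Finset (Fin m) := Finset.univ.filter (fun j => j.castSucc ∈ S) with hTdef
      have hST : S = T.image Fin.castSucc := by
        ext s
        rw [hTdef]
        simp only [Finset.mem_image, Finset.mem_filter, Finset.mem_univ, true_and]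
        constructor
        · intro hs
          have hlt : (s : ℕ) < m := by
            have h1 := s.isLt
            have h2 : s ≠ Fin.last m := fun h => hm (h ▸ hs)
            have h3 : (s : ℕ) ≠ m := fun h => h2 (Fin.ext (by simp [h]))
            omega
          refine ⟨⟨s, hlt⟩, ?_, Fin.ext rfl⟩
          have : (⟨(s : ℕ), hlt⟩ : Fin m).castSucc = s := Fin.ext rfl
          rw [this]
          exact hs
        · rintro ⟨j, hj, rfl⟩
          exact hj
      have hTcard : T.card = k := by
        rw [hST, Finset.card_image_of_injective _ (Fin.castSucc_injective m)] at hScard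
        exact hScard
      have hx : x ∈ ⋃ i ∈ T, ⋃₀ 𝒰 i := (hcov T hTcard) ▸ Set.mem_univ x
      simp only [Set.mem_iUnion, Set.mem_sUnion] at hx
      obtain ⟨j, hjT, U, hU, hxU⟩ := hx
      have hjS : j.castSucc ∈ S := by
        rw [hST]
        exact Finset.mem_image_of_mem _ hjT
      refine ⟨j.castSucc, hjS, ?_⟩
      have hlt : ((j.castSucc : Fin (m + 1)) : ℕ) < m := by simp
      simp only [dif_pos hlt]
      have heq : (⟨((j.castSucc : Fin (m + 1)) : ℕ), hlt⟩ : Fin m) = j := Fin.ext (by simp)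
      rw [heq]
      refine Set.mem_sUnion.2 ⟨nbhd D (ε / 3) U, Set.mem_image_of_mem _ hU, ?_⟩
      exact ⟨x, hxU, by rw [D.refl]; exact ht0⟩
end

section
/- Let F : Set → Set be the n-th power functor FX = X^n with Ff(α) = f ∘ α. For any distance space (X,d_X) and p ∈ [1,∞], the distance d^p_{FX} (the largest distance on X^n making every map X^n → X^n, f ↦ f∘a, non-expanding with respect to the ℓ^p-distance, for each a : n → n) satisfies d^∞_{X^n} ≤ d^p_{FX} ≤ d^p_{X^n} ≤ n^{1/p} · d^∞_{X^n}. In particular d^∞_{FX} = d^∞_{X^n}. -/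
open scoped ENNReal

/-- The `ℓ^p`-distance on `X^n`, `p ∈ [1,∞]`. -/
noncomputable def lpDist {X : Type*} (d : X → X → ℝ≥0∞) (p : ℝ≥0∞) {n : ℕ}
    (f g : Fin n → X) : ℝ≥0∞ :=
  if p = ∞ then ⨆ i, d (f i) (g i)
  else (∑ i, d (f i) (g i) ^ p.toReal) ^ (1 / p.toReal)

/-- For the `n`-th power functor `FX = X^n`, the `ℓ^p`-metrization `d^p_{FX}`
(the largest distance on `X^n` making every map `f ↦ f ∘ a`, `a : n → n`,
non-expanding from `(X^n, d^p_{X^n})`) satisfies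
`d^∞_{X^n} ≤ d^p_{FX} ≤ d^p_{X^n} ≤ n^{1/p} · d^∞_{X^n}`; in particular
`d^∞_{FX} = d^∞_{X^n}`. -/
theorem stmt15 {X : Type*} (D : DistSpace X) (n : ℕ) (p : ℝ≥0∞) (hp : 1 ≤ p)
    (dF : (Fin n → X) → (Fin n → X) → ℝ≥0∞)
    (dF_refl : ∀ f, dF f f = 0)
    (dF_symm : ∀ f g, dF f g = dF g f)
    (dF_tri : ∀ f g h, dF f h ≤ dF f g + dF g h)
    (dF_ne : ∀ (a : Fin n → Fin n) (f g : Fin n → X),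
      dF (f ∘ a) (g ∘ a) ≤ lpDist D.d p f g)
    (dF_max : ∀ ρ : (Fin n → X) → (Fin n → X) → ℝ≥0∞,
      (∀ f, ρ f f = 0) → (∀ f g, ρ f g = ρ g f) →
      (∀ f g h, ρ f h ≤ ρ f g + ρ g h) →
      (∀ (a : Fin n → Fin n) (f g : Fin n → X),
        ρ (f ∘ a) (g ∘ a) ≤ lpDist D.d p f g) →
      ∀ f g, ρ f g ≤ dF f g) :
    (∀ f g : Fin n → X,
      lpDist D.d ∞ f g ≤ dF f g ∧ dF f g ≤ lpDist D.d p f g ∧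
      lpDist D.d p f g ≤ (n : ℝ≥0∞) ^ (1 / p.toReal) * lpDist D.d ∞ f g) ∧
    (p = ∞ → ∀ f g : Fin n → X, dF f g = lpDist D.d ∞ f g) := by
    classical
  have hinf : ∀ f g : Fin n → X, lpDist D.d ∞ f g = ⨆ i, D.d (f i) (g i) := by
    intro f g; simp [lpDist]
  -- key: d^∞ ≤ d^p pointwise on pairs (via single coordinate)
  have key : ∀ f g : Fin n → X, (⨆ i, D.d (f i) (g i)) ≤ lpDist D.d p f g := by
    intro f g
    rcases eq_or_ne p ∞ with hP | hP
    · simp [lpDist, hP]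
    · have hpr : 0 < p.toReal := ENNReal.toReal_pos (by
        intro h; rw [h] at hp; exact absurd hp (by simp)) hP
      apply iSup_le; intro i
      have h1 : D.d (f i) (g i) ^ p.toReal ≤ ∑ j, D.d (f j) (g j) ^ p.toReal :=
        Finset.single_le_sum (f := fun j => D.d (f j) (g j) ^ p.toReal) (fun _ _ => zero_le) (Finset.mem_univ i)
      have := ENNReal.rpow_le_rpow h1 (le_of_lt (by positivity : (0:ℝ) < 1 / p.toReal))
      rw [← ENNReal.rpow_mul, mul_one_div, div_self hpr.ne', ENNReal.rpow_one] at this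
      simp only [lpDist, if_neg hP]
      exact this
  have main : ∀ f g : Fin n → X,
      lpDist D.d ∞ f g ≤ dF f g ∧ dF f g ≤ lpDist D.d p f g ∧
      lpDist D.d p f g ≤ (n : ℝ≥0∞) ^ (1 / p.toReal) * lpDist D.d ∞ f g := by
    intro f g
    refine ⟨?_, ?_, ?_⟩
    · -- apply dF_max with ρ = d^∞
      rw [hinf]
      refine dF_max (fun f g => ⨆ i, D.d (f i) (g i)) (fun f => by simp [D.refl])
        (fun f g => by simp [D.symm (f _) (g _)]) ?_ ?_ f g
      · intro f g h
        apply iSup_le; intro i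
        exact (D.triangle _ (g i) _).trans
          (add_le_add (le_iSup (fun i => D.d (f i) (g i)) i) (le_iSup (fun i => D.d (g i) (h i)) i))
      · intro a f g
        refine le_trans ?_ (key f g)
        apply iSup_le; intro i
        exact le_iSup (fun j => D.d (f j) (g j)) (a i)
    · simpa using dF_ne id f g
    · rcases eq_or_ne p ∞ with hP | hP
      · simp [lpDist, hP]
      · have hpr : 0 < p.toReal := ENNReal.toReal_pos (by
          intro h; rw [h] at hp; exact absurd hp (by simp)) hP
        simp only [lpDist, if_neg hP]
        rw [if_true]
        set s := ⨆ i, D.d (f i) (g i) with hs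
        have h1 : ∑ i, D.d (f i) (g i) ^ p.toReal ≤ (n : ℝ≥0∞) * s ^ p.toReal := by
          calc ∑ i, D.d (f i) (g i) ^ p.toReal ≤ ∑ _i : Fin n, s ^ p.toReal :=
                Finset.sum_le_sum (fun i _ => ENNReal.rpow_le_rpow
                  (le_iSup (fun j => D.d (f j) (g j)) i) hpr.le)
            _ = (n : ℝ≥0∞) * s ^ p.toReal := by simp [mul_comm]
        calc (∑ i, D.d (f i) (g i) ^ p.toReal) ^ (1 / p.toReal)
            ≤ ((n : ℝ≥0∞) * s ^ p.toReal) ^ (1 / p.toReal) :=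
              ENNReal.rpow_le_rpow h1 (by positivity)
          _ = (n : ℝ≥0∞) ^ (1 / p.toReal) * s := by
              rw [ENNReal.mul_rpow_of_nonneg _ _ (by positivity), ← ENNReal.rpow_mul,
                mul_one_div, div_self hpr.ne', ENNReal.rpow_one]
  refine ⟨main, fun hP f g => ?_⟩
  have h1 := (main f g).1
  have h2 := (main f g).2.1
  rw [hP] at h2
  exact le_antisymm h2 h1
end

section
/- Let H be the hyperspace functor assigning to a set X the family of its finite subsets, and let (X,d_X) be a distance space. Then the ℓ^∞-metrization distance d^∞_{HX} on finite subsets of X coincides with the Hausdorff distance d_{HX}. -/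
open scoped ENNReal

/-- The `ℓ^∞`-distance on `X^n`. -/
noncomputable def linfDist {X : Type*} (D : DistSpace X) {n : ℕ}
    (f g : Fin n → X) : ℝ≥0∞ :=
  ⨆ i, D.d (f i) (g i)

/-- The Hausdorff distance between finite subsets of a distance space. -/
noncomputable def hausDist {X : Type*} [DecidableEq X] (D : DistSpace X)
    (A B : Finset X) : ℝ≥0∞ :=
  if A = B then 0
  else if A = ∅ ∨ B = ∅ then ∞
  else max (⨆ a ∈ A, ⨅ b ∈ B, D.d a b) (⨆ b ∈ B, ⨅ a ∈ A, D.d a b)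

lemma attain_inf {X : Type*} (s : Finset X) (hs : s.Nonempty) (f : X → ℝ≥0∞) :
    ∃ b ∈ s, (⨅ x ∈ s, f x) = f b := by
  obtain ⟨b, hb, h⟩ := s.exists_mem_eq_inf hs f
  exact ⟨b, hb, by rw [← Finset.inf_eq_iInf, h]⟩

/-- Directed Hausdorff triangle inequality. -/
lemma dirHaus_tri {X : Type*} (D : DistSpace X) (P Q R : Finset X)
    (hQ : Q.Nonempty) (hR : R.Nonempty) :
    (⨆ p ∈ P, ⨅ r ∈ R, D.d p r) ≤
      (⨆ p ∈ P, ⨅ q ∈ Q, D.d p q) + (⨆ q ∈ Q, ⨅ r ∈ R, D.d q r) := by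
  refine iSup₂_le fun p hp => ?_
  obtain ⟨q, hq, hqe⟩ := attain_inf Q hQ (fun q => D.d p q)
  obtain ⟨r, hr, hre⟩ := attain_inf R hR (fun r => D.d q r)
  calc (⨅ r ∈ R, D.d p r) ≤ D.d p r := iInf₂_le r hr
    _ ≤ D.d p q + D.d q r := D.triangle p q r
    _ ≤ (⨆ p ∈ P, ⨅ q ∈ Q, D.d p q) + (⨆ q ∈ Q, ⨅ r ∈ R, D.d q r) := by
        gcongr
        · exact hqe ▸ le_iSup₂_of_le p hp le_rfl
        · exact hre ▸ le_iSup₂_of_le q hq le_rfl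

lemma haus_refl {X : Type*} [DecidableEq X] (D : DistSpace X) (A : Finset X) :
    hausDist D A A = 0 := by simp [hausDist]

lemma haus_symm {X : Type*} [DecidableEq X] (D : DistSpace X) (A B : Finset X) :
    hausDist D A B = hausDist D B A := by
  unfold hausDist
  rcases eq_or_ne A B with h | h
  · simp [h]
  · rw [if_neg h, if_neg (Ne.symm h)]
    refine if_congr or_comm rfl ?_
    rw [max_comm]
    congr 1
    · exact iSup_congr fun b => iSup_congr fun _ => iInf_congr fun a =>
        iInf_congr fun _ => D.symm a b
    · exact iSup_congr fun a => iSup_congr fun _ => iInf_congr fun b =>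
        iInf_congr fun _ => D.symm a b

lemma haus_tri {X : Type*} [DecidableEq X] (D : DistSpace X) (A B C : Finset X) :
    hausDist D A C ≤ hausDist D A B + hausDist D B C := by
  rcases eq_or_ne A C with hAC | hAC
  · simp [hAC, haus_refl]
  rcases eq_or_ne A B with hAB | hAB
  · subst hAB; rw [haus_refl, zero_add]
  rcases eq_or_ne B C with hBC | hBC
  · subst hBC; rw [haus_refl, add_zero]
  rcases eq_or_ne A ∅ with hA | hA
  · have : hausDist D A B = ⊤ := by rw [hausDist, if_neg hAB, if_pos (Or.inl hA)]
    rw [this, top_add]; exact le_top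
  rcases eq_or_ne C ∅ with hC | hC
  · have : hausDist D B C = ⊤ := by rw [hausDist, if_neg hBC, if_pos (Or.inr hC)]
    rw [this, add_top]; exact le_top
  rcases eq_or_ne B ∅ with hB | hB
  · have : hausDist D A B = ⊤ := by rw [hausDist, if_neg hAB, if_pos (Or.inr hB)]
    rw [this, top_add]; exact le_top
  have hAn : A.Nonempty := Finset.nonempty_of_ne_empty hA
  have hBn : B.Nonempty := Finset.nonempty_of_ne_empty hB
  have hCn : C.Nonempty := Finset.nonempty_of_ne_empty hC
  rw [hausDist, if_neg hAC, if_neg (by simp [hA, hC]),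
    hausDist, if_neg hAB, if_neg (by simp [hA, hB]),
    hausDist, if_neg hBC, if_neg (by simp [hB, hC])]
  refine max_le ?_ ?_
  · calc (⨆ a ∈ A, ⨅ c ∈ C, D.d a c)
        ≤ (⨆ a ∈ A, ⨅ b ∈ B, D.d a b) + ⨆ b ∈ B, ⨅ c ∈ C, D.d b c :=
          dirHaus_tri D A B C hBn hCn
      _ ≤ _ := by gcongr <;> [exact le_max_left _ _; exact le_max_left _ _]
  · have key : (⨆ c ∈ C, ⨅ a ∈ A, D.d a c)
        ≤ (⨆ c ∈ C, ⨅ b ∈ B, D.d b c) + ⨆ b ∈ B, ⨅ a ∈ A, D.d a b := by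
      have hd : ∀ (P Q : Finset X), (⨆ p ∈ P, ⨅ q ∈ Q, D.d q p)
          = ⨆ p ∈ P, ⨅ q ∈ Q, D.d p q := fun P Q =>
        iSup_congr fun p => iSup_congr fun _ => iInf_congr fun q =>
          iInf_congr fun _ => D.symm q p
      rw [hd C A, hd C B, hd B A]
      exact dirHaus_tri D C B A hBn hAn
    calc (⨆ c ∈ C, ⨅ a ∈ A, D.d a c) ≤ _ := key
      _ ≤ _ := by
          rw [add_comm]
          gcongr <;> [exact le_max_right _ _; exact le_max_right _ _]

lemma haus_ne {X : Type*} [DecidableEq X] (D : DistSpace X) (n : ℕ)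
    (a : Finset (Fin n)) (f g : Fin n → X) :
    hausDist D (a.image f) (a.image g) ≤ linfDist D f g := by
  rcases eq_or_ne (a.image f) (a.image g) with h | h
  · simp [hausDist, h]
  have han : a.Nonempty := by
    rcases Finset.eq_empty_or_nonempty a with rfl | h'
    · simp at h
    · exact h'
  rw [hausDist, if_neg h, if_neg (by
    simp [Finset.image_eq_empty, ← Finset.not_nonempty_iff_eq_empty, han])]
  refine max_le (iSup₂_le fun x hx => ?_) (iSup₂_le fun x hx => ?_)
  · obtain ⟨i, hi, rfl⟩ := Finset.mem_image.mp hx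
    calc (⨅ b ∈ a.image g, D.d (f i) b) ≤ D.d (f i) (g i) :=
          iInf₂_le (g i) (Finset.mem_image_of_mem g hi)
      _ ≤ linfDist D f g := le_iSup (fun i => D.d (f i) (g i)) i
  · obtain ⟨i, hi, rfl⟩ := Finset.mem_image.mp hx
    calc (⨅ b ∈ a.image f, D.d b (g i)) ≤ D.d (f i) (g i) :=
          iInf₂_le (f i) (Finset.mem_image_of_mem f hi)
      _ ≤ linfDist D f g := le_iSup (fun i => D.d (f i) (g i)) i

/-- For the hyperspace functor `H` of finite subsets, the `ℓ^∞`-metrization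
distance `d^∞_{HX}` (the largest distance on finite subsets making every map
`f ↦ f[a]`, `a ⊆ {0,…,n−1}`, non-expanding from `(X^n, d^∞_{X^n})`) coincides
with the Hausdorff distance. -/
theorem stmt16 {X : Type*} [DecidableEq X] (D : DistSpace X)
    (dH : Finset X → Finset X → ℝ≥0∞)
    (h_refl : ∀ A, dH A A = 0)
    (h_symm : ∀ A B, dH A B = dH B A)
    (h_tri : ∀ A B C, dH A C ≤ dH A B + dH B C)
    (h_ne : ∀ (n : ℕ) (a : Finset (Fin n)) (f g : Fin n → X),
      dH (a.image f) (a.image g) ≤ linfDist D f g)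
    (h_max : ∀ ρ : Finset X → Finset X → ℝ≥0∞,
      (∀ A, ρ A A = 0) → (∀ A B, ρ A B = ρ B A) →
      (∀ A B C, ρ A C ≤ ρ A B + ρ B C) →
      (∀ (n : ℕ) (a : Finset (Fin n)) (f g : Fin n → X),
        ρ (a.image f) (a.image g) ≤ linfDist D f g) →
      ∀ A B, ρ A B ≤ dH A B) :
    ∀ A B : Finset X, dH A B = hausDist D A B := by
  intro A B
  refine le_antisymm ?_ (h_max (hausDist D) (haus_refl D) (haus_symm D)
    (haus_tri D) (haus_ne D) A B)
  rcases eq_or_ne A B with rfl | hAB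
  · simp [h_refl, haus_refl]
  rcases eq_or_ne A ∅ with hA | hA
  · rw [hausDist, if_neg hAB, if_pos (Or.inl hA)]; exact le_top
  rcases eq_or_ne B ∅ with hB | hB
  · rw [hausDist, if_neg hAB, if_pos (Or.inr hB)]; exact le_top
  have hAn : A.Nonempty := Finset.nonempty_of_ne_empty hA
  have hBn : B.Nonempty := Finset.nonempty_of_ne_empty hB
  -- choice of nearest points
  have hφ : ∀ x : X, ∃ b ∈ B, (⨅ b' ∈ B, D.d x b') = D.d x b :=
    fun x => attain_inf B hBn _
  choose φ hφB hφd using hφ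
  have hψ : ∀ y : X, ∃ a ∈ A, (⨅ a' ∈ A, D.d a' y) = D.d a y :=
    fun y => attain_inf A hAn _
  choose ψ hψA hψd using hψ
  set lA := A.toList with hlA
  set lB := B.toList with hlB
  set n := lA.length + lB.length with hn
  set f : Fin n → X := Fin.addCases (fun i => lA.get i) (fun j => ψ (lB.get j)) with hf
  set g : Fin n → X := Fin.addCases (fun i => φ (lA.get i)) (fun j => lB.get j) with hg
  have memA : ∀ i, lA.get i ∈ A := fun i => Finset.mem_toList.mp (lA.get_mem _)
  have memB : ∀ j, lB.get j ∈ B := fun j => Finset.mem_toList.mp (lB.get_mem _)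
  have himf : (Finset.univ.image f) = A := by
    apply Finset.Subset.antisymm
    · intro x hx
      obtain ⟨i, _, rfl⟩ := Finset.mem_image.mp hx
      refine Fin.addCases (motive := fun i => f i ∈ A) ?_ ?_ i
      · intro i; simpa [hf] using memA i
      · intro j; simpa [hf] using hψA (lB.get j)
    · intro x hx
      obtain ⟨i, hi⟩ := List.mem_iff_get.mp (Finset.mem_toList.mpr hx)
      refine Finset.mem_image.mpr ⟨Fin.castAdd lB.length i, Finset.mem_univ _, ?_⟩
      simpa [hf] using hi
  have himg : (Finset.univ.image g) = B := by
    apply Finset.Subset.antisymm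
    · intro x hx
      obtain ⟨i, _, rfl⟩ := Finset.mem_image.mp hx
      refine Fin.addCases (motive := fun i => g i ∈ B) ?_ ?_ i
      · intro i; simpa [hg] using hφB (lA.get i)
      · intro j; simpa [hg] using memB j
    · intro x hx
      obtain ⟨j, hj⟩ := List.mem_iff_get.mp (Finset.mem_toList.mpr hx)
      refine Finset.mem_image.mpr ⟨Fin.natAdd lA.length j, Finset.mem_univ _, ?_⟩
      simpa [hg] using hj
  have key : dH A B ≤ linfDist D f g := by
    rw [← himf, ← himg]; exact h_ne n Finset.univ f g
  refine key.trans ?_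
  rw [hausDist, if_neg hAB, if_neg (by simp [hA, hB])]
  refine iSup_le fun i => ?_
  refine Fin.addCases (motive := fun i => D.d (f i) (g i) ≤ _) ?_ ?_ i
  · intro i
    have : D.d (lA.get i) (φ (lA.get i)) ≤ ⨆ a ∈ A, ⨅ b ∈ B, D.d a b :=
      (hφd (lA.get i)) ▸ le_iSup₂_of_le (lA.get i) (memA i) le_rfl
    simpa [hf, hg] using this.trans (le_max_left _ _)
  · intro j
    have : D.d (ψ (lB.get j)) (lB.get j) ≤ ⨆ b ∈ B, ⨅ a ∈ A, D.d a b :=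
      (hψd (lB.get j)) ▸ le_iSup₂_of_le (lB.get j) (memB j) le_rfl
    simpa [hf, hg] using this.trans (le_max_right _ _)
end

section
/- Let (X,d_X) be a distance space and let a,b be finite subsets of X. Define Γ(a,b) as the set of finite graphs Γ = (V,E) with vertex set V ⊆ X containing a ∪ b, such that every connected component of Γ meets both a and b; define the length ℓ(Γ) = Σ_{e∈E} diam(e) where diam(e) = max{d_X(x,y) : x,y ∈ e}. Then for any graph Γ ∈ Γ(a,b), the quantity inf{ℓ(Γ') : Γ' ∈ Γ(a,b)} is an upper bound for the distance d^1_{HX}(a,b); in fact d^1_{HX}(a,b) = inf({ℓ(Γ) : Γ ∈ Γ(a,b)} ∪ {∞}), and d_{HX}(a,b) ≤ d^1_{HX}(a,b). -/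
open scoped ENNReal

/-- The `ℓ^1`-distance on `X^n`. -/
noncomputable def l1Dist {X : Type*} (D : DistSpace X) {n : ℕ}
    (f g : Fin n → X) : ℝ≥0∞ :=
  ∑ i, D.d (f i) (g i)

/-- Reachability in a graph given by an edge set `E` (edges taken as
unordered, represented by pairs). -/
def Reach {X : Type*} (E : Finset (X × X)) : X → X → Prop :=
  Relation.ReflTransGen (fun u v => (u, v) ∈ E ∨ (v, u) ∈ E)

set_option linter.unusedSectionVars false

section Aux

open Finset

open scoped Classical

variable {X : Type*} [DecidableEq X]

lemma reach_symm {E : Finset (X × X)} {x y : X} (h : Reach E x y) : Reach E y x :=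
  by
    induction h with
    | refl => exact Relation.ReflTransGen.refl
    | tail _ h2 ih => exact Relation.ReflTransGen.head (Or.symm h2) ih

lemma reach_mono {E E' : Finset (X × X)} (hEE : E ⊆ E') {x y : X} (h : Reach E x y) :
    Reach E' x y :=
  by
    induction h with
    | refl => exact Relation.ReflTransGen.refl
    | tail _ h2 ih =>
      exact Relation.ReflTransGen.tail ih (Or.imp (fun h' => hEE h') (fun h' => hEE h') h2)

lemma reach_empty {x y : X} (h : Reach (∅ : Finset (X × X)) x y) : x = y := by
  induction h with
  | refl => rfl
  | tail _ h2 ih => simp at h2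

lemma reach_of_redundant {E : Finset (X × X)} {e : X × X}
    (hred : Reach (E.erase e) e.1 e.2) {x y : X} (h : Reach E x y) :
    Reach (E.erase e) x y := by
  have key : ∀ b c : X, ((b, c) ∈ E ∨ (c, b) ∈ E) → Reach (E.erase e) b c := by
    intro b c hm
    rcases hm with hm | hm
    · by_cases hbe : (b, c) = e
      · subst hbe; exact hred
      · exact Relation.ReflTransGen.single (Or.inl (Finset.mem_erase.mpr ⟨hbe, hm⟩))
    · by_cases hbe : (c, b) = e
      · subst hbe; exact reach_symm hred
      · exact Relation.ReflTransGen.single (Or.inr (Finset.mem_erase.mpr ⟨hbe, hm⟩))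
  induction h with
  | refl => exact Relation.ReflTransGen.refl
  | tail _ h2 ih => exact ih.trans (key _ _ h2)

lemma reach_subst {E : Finset (X × X)} {e : X × X} {u w : X}
    (he : e ∈ E) (hor : e = (u, w) ∨ e = (w, u))
    (hleaf : ∀ g ∈ E.erase e, w ≠ g.1 ∧ w ≠ g.2)
    {x y : X} (h : Reach E x y) :
    Reach (E.erase e) (if x = w then u else x) (if y = w then u else y) := by
  have subval : ∀ z : X, z = u ∨ z = w → (if z = w then u else z) = u := by
    rintro z (rfl | rfl)
    · split <;> rename_i h' <;> simp [h']
    · simp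
  have key : ∀ b c : X, ((b, c) ∈ E ∨ (c, b) ∈ E) →
      Reach (E.erase e) (if b = w then u else b) (if c = w then u else c) := by
    intro b c hm
    rcases hm with hm | hm
    · by_cases hbe : (b, c) = e
      · have hbc : (b = u ∧ c = w) ∨ (b = w ∧ c = u) := by
          rcases hor with h' | h' <;> rw [h'] at hbe <;>
            simp only [Prod.mk.injEq] at hbe
          · exact Or.inl hbe
          · exact Or.inr hbe
        rcases hbc with ⟨h1, h2⟩ | ⟨h1, h2⟩ <;>
          { rw [subval b (by tauto), subval c (by tauto)]
            exact Relation.ReflTransGen.refl }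
      · have hmem : (b, c) ∈ E.erase e := Finset.mem_erase.mpr ⟨hbe, hm⟩
        have h1 := hleaf _ hmem
        rw [if_neg (Ne.symm h1.1), if_neg (Ne.symm h1.2)]
        exact Relation.ReflTransGen.single (Or.inl hmem)
    · by_cases hbe : (c, b) = e
      · have hbc : (c = u ∧ b = w) ∨ (c = w ∧ b = u) := by
          rcases hor with h' | h' <;> rw [h'] at hbe <;>
            simp only [Prod.mk.injEq] at hbe
          · exact Or.inl hbe
          · exact Or.inr hbe
        rcases hbc with ⟨h1, h2⟩ | ⟨h1, h2⟩ <;>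
          { rw [subval b (by tauto), subval c (by tauto)]
            exact Relation.ReflTransGen.refl }
      · have hmem : (c, b) ∈ E.erase e := Finset.mem_erase.mpr ⟨hbe, hm⟩
        have h1 := hleaf _ hmem
        rw [if_neg (Ne.symm h1.2), if_neg (Ne.symm h1.1)]
        exact Relation.ReflTransGen.single (Or.inr hmem)
  induction h with
  | refl => exact Relation.ReflTransGen.refl
  | tail _ h2 ih => exact ih.trans (key _ _ h2)

lemma reach_away {E₀ : Finset (X × X)} {f : X × X} {w : X} (hw : w = f.1 ∨ w = f.2)
    {p x : X} (h : Reach E₀ p x) :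
    Reach (E₀.erase f) p x ∨ Reach E₀ p w := by
  induction h with
  | refl => exact Or.inl Relation.ReflTransGen.refl
  | tail _ h2 ih =>
    rename_i b c _
    rcases ih with ih | ih
    · rcases h2 with hm | hm
      · by_cases hbe : (b, c) = f
        · subst hbe
          have hw' : w = b ∨ w = c := hw
          rcases hw' with rfl | rfl
          · exact Or.inr (reach_mono (Finset.erase_subset _ _) ih)
          · exact Or.inr ((reach_mono (Finset.erase_subset _ _) ih).tail (Or.inl hm))
        · exact Or.inl (ih.tail (Or.inl (Finset.mem_erase.mpr ⟨hbe, hm⟩)))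
      · by_cases hbe : (c, b) = f
        · subst hbe
          have hw' : w = c ∨ w = b := hw
          rcases hw' with rfl | rfl
          · exact Or.inr ((reach_mono (Finset.erase_subset _ _) ih).tail (Or.inr hm))
          · exact Or.inr (reach_mono (Finset.erase_subset _ _) ih)
        · exact Or.inl (ih.tail (Or.inr (Finset.mem_erase.mpr ⟨hbe, hm⟩)))
    · exact Or.inr ih

lemma reach_decomp {E : Finset (X × X)} (e : X × X) {p q : X} (h : Reach E p q) :
    Reach (E.erase e) p q ∨ (Reach (E.erase e) p e.1 ∧ Reach (E.erase e) e.2 q) ∨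
      (Reach (E.erase e) p e.2 ∧ Reach (E.erase e) e.1 q) := by
  induction h with
  | refl => exact Or.inl Relation.ReflTransGen.refl
  | tail _ h2 ih =>
    rename_i b c _
    rcases h2 with hm | hm
    · by_cases hbe : (b, c) = e
      · subst hbe
        rcases ih with ih | ⟨ih1, ih2⟩ | ⟨ih1, ih2⟩
        · exact Or.inr (Or.inl ⟨ih, Relation.ReflTransGen.refl⟩)
        · exact Or.inr (Or.inl ⟨ih1, Relation.ReflTransGen.refl⟩)
        · exact Or.inl ih1
      · have hmem : (b, c) ∈ E.erase e := Finset.mem_erase.mpr ⟨hbe, hm⟩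
        rcases ih with ih | ⟨ih1, ih2⟩ | ⟨ih1, ih2⟩
        · exact Or.inl (ih.tail (Or.inl hmem))
        · exact Or.inr (Or.inl ⟨ih1, ih2.tail (Or.inl hmem)⟩)
        · exact Or.inr (Or.inr ⟨ih1, ih2.tail (Or.inl hmem)⟩)
    · by_cases hbe : (c, b) = e
      · subst hbe
        rcases ih with ih | ⟨ih1, ih2⟩ | ⟨ih1, ih2⟩
        · exact Or.inr (Or.inr ⟨ih, Relation.ReflTransGen.refl⟩)
        · exact Or.inl ih1
        · exact Or.inr (Or.inl ⟨ih1.trans (reach_symm ih2), reach_symm ih2⟩)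
      · have hmem : (c, b) ∈ E.erase e := Finset.mem_erase.mpr ⟨hbe, hm⟩
        rcases ih with ih | ⟨ih1, ih2⟩ | ⟨ih1, ih2⟩
        · exact Or.inl (ih.tail (Or.inr hmem))
        · exact Or.inr (Or.inl ⟨ih1, ih2.tail (Or.inr hmem)⟩)
        · exact Or.inr (Or.inr ⟨ih1, ih2.tail (Or.inr hmem)⟩)

lemma d_le_of_reach (D : DistSpace X) :
    ∀ (n : ℕ) (E : Finset (X × X)), E.card ≤ n → ∀ x y : X, Reach E x y →
      D.d x y ≤ ∑ e ∈ E, D.d e.1 e.2 := by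
  intro n
  induction n with
  | zero =>
    intro E hE x y h
    have : E = ∅ := Finset.card_eq_zero.mp (Nat.le_zero.mp hE)
    subst this
    rw [reach_empty h, D.refl]
    exact zero_le
  | succ n ih =>
    intro E hcard x y h
    rcases Relation.ReflTransGen.cases_head h with rfl | ⟨z, hstep, hrest⟩
    · rw [D.refl]; exact zero_le
    · have hcard' : ∀ e : X × X, e ∈ E → (E.erase e).card ≤ n := fun e he => by
        rw [Finset.card_erase_of_mem he]; omega
      rcases hstep with hm | hm
      · by_cases hred : Reach (E.erase (x, z)) x z
        · have hr : Reach (E.erase (x, z)) x y :=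
            reach_of_redundant hred (Relation.ReflTransGen.head (Or.inl hm) hrest)
          exact (ih _ (hcard' _ hm) x y hr).trans
            (Finset.sum_le_sum_of_subset (Finset.erase_subset _ _))
        · rcases reach_decomp (x, z) hrest with hd | ⟨hd1, hd2⟩ | ⟨hd1, hd2⟩
          · calc D.d x y ≤ D.d x z + D.d z y := D.triangle _ _ _
              _ ≤ D.d x z + ∑ e ∈ E.erase (x, z), D.d e.1 e.2 :=
                  add_le_add le_rfl (ih _ (hcard' _ hm) _ _ hd)
              _ = ∑ e ∈ E, D.d e.1 e.2 := Finset.add_sum_erase E (fun e => D.d e.1 e.2) hm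
          · exact absurd (reach_symm hd1) hred
          · exact (ih _ (hcard' _ hm) _ _ hd2).trans
              (Finset.sum_le_sum_of_subset (Finset.erase_subset _ _))
      · by_cases hred : Reach (E.erase (z, x)) z x
        · have hr : Reach (E.erase (z, x)) x y :=
            reach_of_redundant hred (Relation.ReflTransGen.head (Or.inr hm) hrest)
          exact (ih _ (hcard' _ hm) x y hr).trans
            (Finset.sum_le_sum_of_subset (Finset.erase_subset _ _))
        · rcases reach_decomp (z, x) hrest with hd | ⟨hd1, hd2⟩ | ⟨hd1, hd2⟩
          · calc D.d x y ≤ D.d x z + D.d z y := D.triangle _ _ _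
              _ = D.d z x + D.d z y := by rw [D.symm x z]
              _ ≤ D.d z x + ∑ e ∈ E.erase (z, x), D.d e.1 e.2 :=
                  add_le_add le_rfl (ih _ (hcard' _ hm) _ _ hd)
              _ = ∑ e ∈ E, D.d e.1 e.2 := Finset.add_sum_erase E (fun e => D.d e.1 e.2) hm
          · exact (ih _ (hcard' _ hm) _ _ hd2).trans
              (Finset.sum_le_sum_of_subset (Finset.erase_subset _ _))
          · exact absurd hd1 hred

lemma enum_image (C : Finset X) :
    Finset.univ.image (fun i => ((C.equivFin.symm i : C) : X)) = C := by
  ext x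
  simp only [Finset.mem_image, Finset.mem_univ, true_and]
  constructor
  · rintro ⟨i, rfl⟩; exact (C.equivFin.symm i).2
  · intro hx; exact ⟨C.equivFin ⟨x, hx⟩, by simp⟩

lemma move_replace {D : DistSpace X} {dH1 : Finset X → Finset X → ℝ≥0∞}
    (h_ne : ∀ (n : ℕ) (c : Finset (Fin n)) (f g : Fin n → X),
      dH1 (c.image f) (c.image g) ≤ l1Dist D f g)
    (C : Finset X) {u : X} (hu : u ∈ C) (v : X) :
    dH1 C (insert v (C.erase u)) ≤ D.d u v := by
  set f : Fin C.card → X := fun i => ((C.equivFin.symm i : C) : X) with hf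
  have hfmem : ∀ i, f i ∈ C := fun i => (C.equivFin.symm i).2
  have hfinj : Function.Injective f := fun i j hij =>
    C.equivFin.symm.injective (Subtype.coe_injective hij)
  set i₀ : Fin C.card := C.equivFin ⟨u, hu⟩ with hi₀
  have hfi₀ : f i₀ = u := by simp [hf, hi₀]
  set g : Fin C.card → X := fun i => if f i = u then v else f i with hg
  have h1 : Finset.univ.image f = C := enum_image C
  have h2 : Finset.univ.image g = insert v (C.erase u) := by
    ext x
    simp only [Finset.mem_image, Finset.mem_univ, true_and, Finset.mem_insert, Finset.mem_erase]
    constructor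
    · rintro ⟨i, rfl⟩
      by_cases hi : f i = u
      · left; simp [hg, hi]
      · right
        refine ⟨?_, ?_⟩ <;> simp only [hg, if_neg hi]
        · exact hi
        · exact hfmem i
    · rintro (rfl | ⟨hxu, hxC⟩)
      · exact ⟨i₀, by simp [hg, hfi₀]⟩
      · refine ⟨C.equivFin ⟨x, hxC⟩, ?_⟩
        have hfx : f (C.equivFin ⟨x, hxC⟩) = x := by simp [hf]
        simp [hg, hfx, hxu]
  have h3 : l1Dist D f g = D.d u v := by
    rw [l1Dist, Finset.sum_eq_single i₀]
    · rw [hfi₀]; simp [hg, hfi₀]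
    · intro i _ hi
      have hne' : f i ≠ u := fun h => hi (hfinj (h.trans hfi₀.symm))
      simp [hg, if_neg hne', D.refl]
    · intro h; exact absurd (Finset.mem_univ i₀) h
  calc dH1 C (insert v (C.erase u))
      = dH1 (Finset.univ.image f) (Finset.univ.image g) := by rw [h1, h2]
    _ ≤ l1Dist D f g := h_ne _ _ _ _
    _ = D.d u v := h3

lemma move_insert {D : DistSpace X} {dH1 : Finset X → Finset X → ℝ≥0∞}
    (h_ne : ∀ (n : ℕ) (c : Finset (Fin n)) (f g : Fin n → X),
      dH1 (c.image f) (c.image g) ≤ l1Dist D f g)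
    (C : Finset X) {u : X} (hu : u ∈ C) (v : X) :
    dH1 C (insert v C) ≤ D.d u v := by
  set f0 : Fin C.card → X := fun i => ((C.equivFin.symm i : C) : X) with hf0
  set f : Fin (C.card + 1) → X := Fin.snoc f0 u with hf
  set g : Fin (C.card + 1) → X := Fin.snoc f0 v with hg
  have h1 : Finset.univ.image f = C := by
    ext x
    simp only [Finset.mem_image, Finset.mem_univ, true_and]
    constructor
    · rintro ⟨i, rfl⟩
      induction i using Fin.lastCases with
      | last => simpa [hf, Fin.snoc_last] using hu
      | cast i =>
        have hcs : f i.castSucc = f0 i := by simp [hf, Fin.snoc_castSucc]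
        rw [hcs]; exact (C.equivFin.symm i).2
    · intro hx
      exact ⟨(C.equivFin ⟨x, hx⟩).castSucc, by simp [hf, Fin.snoc_castSucc, hf0]⟩
  have h2 : Finset.univ.image g = insert v C := by
    ext x
    simp only [Finset.mem_image, Finset.mem_univ, true_and, Finset.mem_insert]
    constructor
    · rintro ⟨i, rfl⟩
      induction i using Fin.lastCases with
      | last => left; simp [hg, Fin.snoc_last]
      | cast i =>
        right
        have hcs : g i.castSucc = f0 i := by simp [hg, Fin.snoc_castSucc]
        rw [hcs]; exact (C.equivFin.symm i).2
    · rintro (rfl | hx)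
      · exact ⟨Fin.last _, by simp [hg, Fin.snoc_last]⟩
      · exact ⟨(C.equivFin ⟨x, hx⟩).castSucc, by simp [hg, Fin.snoc_castSucc, hf0]⟩
  have h3 : l1Dist D f g = D.d u v := by
    rw [l1Dist, Fin.sum_univ_castSucc]
    simp [hf, hg, Fin.snoc_castSucc, Fin.snoc_last, D.refl]
  calc dH1 C (insert v C)
      = dH1 (Finset.univ.image f) (Finset.univ.image g) := by rw [h1, h2]
    _ ≤ l1Dist D f g := h_ne _ _ _ _
    _ = D.d u v := h3

def Hyp (E : Finset (X × X)) (A B : Finset X) : Prop :=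
  (∀ x ∈ A, x ∉ B → ∃ y ∈ B, Reach E x y) ∧ (∀ y ∈ B, y ∉ A → ∃ x ∈ A, Reach E y x)

lemma hyp_symm {E : Finset (X × X)} {A B : Finset X} (h : Hyp E A B) : Hyp E B A :=
  ⟨h.2, h.1⟩

def vset (E : Finset (X × X)) : Finset X := E.image Prod.fst ∪ E.image Prod.snd

lemma other_end {g : X × X} {w₂ : X} (hw₂ : w₂ = g.1 ∨ w₂ = g.2) :
    ∃ u₂ : X, g = (u₂, w₂) ∨ g = (w₂, u₂) := by
  by_cases h1 : w₂ = g.1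
  · exact ⟨g.2, Or.inr (by rw [h1])⟩
  · rcases hw₂ with h2 | h2
    · exact absurd h2 h1
    · exact ⟨g.1, Or.inl (by rw [h2])⟩

lemma leaf_find {E : Finset (X × X)}
    (hess : ∀ f ∈ E, ¬ Reach (E.erase f) f.1 f.2) :
    ∀ (n : ℕ) (f : X × X), f ∈ E → ∀ w : X, (w = f.1 ∨ w = f.2) →
      ((vset E).filter (fun x => Reach (E.erase f) w x)).card ≤ n →
      ∃ g w', (g ∈ E ∧ (w' = g.1 ∨ w' = g.2) ∧ ∀ h ∈ E.erase g, w' ≠ h.1 ∧ w' ≠ h.2) ∧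
        Reach (E.erase f) w w' := by
  have hwv : ∀ (f : X × X), f ∈ E → ∀ w : X, (w = f.1 ∨ w = f.2) → w ∈ vset E := by
    intro f hf w hw
    rcases hw with rfl | rfl
    · exact Finset.mem_union_left _ (Finset.mem_image_of_mem _ hf)
    · exact Finset.mem_union_right _ (Finset.mem_image_of_mem _ hf)
  intro n
  induction n with
  | zero =>
    intro f hf w hw hcard
    exfalso
    have hmem : w ∈ (vset E).filter (fun x => Reach (E.erase f) w x) :=
      Finset.mem_filter.mpr ⟨hwv f hf w hw, Relation.ReflTransGen.refl⟩
    have := Finset.card_pos.mpr ⟨w, hmem⟩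
    omega
  | succ n ih =>
    intro f hf w hw hcard
    by_cases hlf : ∀ h ∈ E.erase f, w ≠ h.1 ∧ w ≠ h.2
    · exact ⟨f, w, ⟨hf, hw, hlf⟩, Relation.ReflTransGen.refl⟩
    · push_neg at hlf
      obtain ⟨g, hgmem, hg⟩ := hlf
      have hwg : w = g.1 ∨ w = g.2 := by
        by_cases h1 : w = g.1
        exacts [Or.inl h1, Or.inr (hg h1)]
      have hgE : g ∈ E := Finset.mem_of_mem_erase hgmem
      have hgf : g ≠ f := (Finset.mem_erase.mp hgmem).1
      set w' : X := if w = g.1 then g.2 else g.1 with hw'def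
      have hw'2 : (w = g.1 ∧ w' = g.2) ∨ (w = g.2 ∧ w' = g.1) := by
        by_cases h1 : w = g.1
        · exact Or.inl ⟨h1, by rw [hw'def, if_pos h1]⟩
        · rcases hwg with h2 | h2
          · exact absurd h2 h1
          · exact Or.inr ⟨h2, by rw [hw'def, if_neg h1]⟩
      have hw'or : w' = g.1 ∨ w' = g.2 := by
        rcases hw'2 with ⟨_, h2⟩ | ⟨_, h2⟩
        exacts [Or.inr h2, Or.inl h2]
      have hworient : (w, w') = g ∨ (w', w) = g := by
        rcases hw'2 with ⟨h1, h2⟩ | ⟨h1, h2⟩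
        · left; rw [h1, h2]
        · right; rw [h1, h2]
      have hstep : Reach (E.erase f) w w' := by
        rcases hworient with h | h
        · exact Relation.ReflTransGen.single (Or.inl (by rw [h]; exact hgmem))
        · exact Relation.ReflTransGen.single (Or.inr (by rw [h]; exact hgmem))
      have hnrw : ¬ Reach (E.erase g) w' w := by
        intro hr
        apply hess g hgE
        rcases hw'2 with ⟨h1, h2⟩ | ⟨h1, h2⟩
        · rw [h1, h2] at hr; exact reach_symm hr
        · rw [h1, h2] at hr; exact hr
      have hsubset : ∀ x, Reach (E.erase g) w' x → Reach (E.erase f) w x := by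
        intro x hx
        have hwfg : w = f.1 ∨ w = f.2 := hw
        rcases reach_away hwfg hx with h | h
        · refine hstep.trans (reach_mono ?_ h)
          intro p hp
          exact Finset.mem_erase.mpr
            ⟨(Finset.mem_erase.mp hp).1,
             Finset.mem_of_mem_erase (Finset.mem_erase.mp hp).2⟩
        · exact absurd h hnrw
      have hw_in : w ∈ (vset E).filter (fun x => Reach (E.erase f) w x) :=
        Finset.mem_filter.mpr ⟨hwv f hf w hw, Relation.ReflTransGen.refl⟩
      have hw_notin : w ∉ (vset E).filter (fun x => Reach (E.erase g) w' x) := by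
        intro hmem
        exact hnrw (Finset.mem_filter.mp hmem).2
      have hsub : (vset E).filter (fun x => Reach (E.erase g) w' x) ⊆
          (vset E).filter (fun x => Reach (E.erase f) w x) := by
        intro x hx
        exact Finset.mem_filter.mpr
          ⟨(Finset.mem_filter.mp hx).1, hsubset x (Finset.mem_filter.mp hx).2⟩
      have hss := (Finset.ssubset_iff_of_subset hsub).mpr ⟨w, hw_in, hw_notin⟩
      have hcard2 : ((vset E).filter (fun x => Reach (E.erase g) w' x)).card ≤ n := by
        have := Finset.card_lt_card hss
        omega
      obtain ⟨g', w'', hl, hr⟩ := ih g hgE w' hw'or hcard2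
      exact ⟨g', w'', hl, hsubset w'' hr⟩

lemma leaf_exists {E : Finset (X × X)}
    (hess : ∀ f ∈ E, ¬ Reach (E.erase f) f.1 f.2)
    {f : X × X} (hf : f ∈ E) {w : X} (hw : w = f.1 ∨ w = f.2) :
    ∃ g w', (g ∈ E ∧ (w' = g.1 ∨ w' = g.2) ∧ ∀ h ∈ E.erase g, w' ≠ h.1 ∧ w' ≠ h.2) ∧
      Reach (E.erase f) w w' :=
  leaf_find hess _ f hf w hw le_rfl

lemma process {D : DistSpace X} {dH1 : Finset X → Finset X → ℝ≥0∞}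
    (h_tri : ∀ A B C, dH1 A C ≤ dH1 A B + dH1 B C)
    (h_ne : ∀ (n : ℕ) (c : Finset (Fin n)) (f g : Fin n → X),
      dH1 (c.image f) (c.image g) ≤ l1Dist D f g)
    {E : Finset (X × X)} {f : X × X} {w u : X}
    (hfE : f ∈ E) (hor : f = (u, w) ∨ f = (w, u))
    (hleaf : ∀ g ∈ E.erase f, w ≠ g.1 ∧ w ≠ g.2)
    (hIH : ∀ A B : Finset X, Hyp (E.erase f) A B →
      dH1 A B ≤ ∑ e ∈ E.erase f, D.d e.1 e.2)
    {A B : Finset X} (hH : Hyp E A B) (hwA : w ∈ A) (hwB : w ∉ B) :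
    dH1 A B ≤ ∑ e ∈ E, D.d e.1 e.2 := by
  have subne : ∀ z : X, z ≠ w → (if z = w then u else z) = z := fun z h => if_neg h
  have subw : (if w = w then u else w) = u := if_pos rfl
  set A₂ : Finset X := insert u (A.erase w) with hA₂
  have hH2 : Hyp (E.erase f) A₂ B := by
    constructor
    · intro x hx hxB
      rcases Finset.mem_insert.mp hx with rfl | hx'
      · obtain ⟨y, hyB, hr⟩ := hH.1 w hwA hwB
        have hs := reach_subst hfE hor hleaf hr
        rw [subw, subne y (fun h => hwB (h ▸ hyB))] at hs
        exact ⟨y, hyB, hs⟩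
      · have hxw : x ≠ w := (Finset.mem_erase.mp hx').1
        obtain ⟨y, hyB, hr⟩ := hH.1 x (Finset.mem_of_mem_erase hx') hxB
        have hs := reach_subst hfE hor hleaf hr
        rw [subne x hxw, subne y (fun h => hwB (h ▸ hyB))] at hs
        exact ⟨y, hyB, hs⟩
    · intro y hyB hyA₂
      have hyw : y ≠ w := fun h => hwB (h ▸ hyB)
      have hyA : y ∉ A := fun h =>
        hyA₂ (Finset.mem_insert.mpr (Or.inr (Finset.mem_erase.mpr ⟨hyw, h⟩)))
      obtain ⟨x, hxA, hr⟩ := hH.2 y hyB hyA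
      have hs := reach_subst hfE hor hleaf hr
      rw [subne y hyw] at hs
      refine ⟨if x = w then u else x, ?_, hs⟩
      by_cases hxw : x = w
      · rw [if_pos hxw]; exact Finset.mem_insert_self _ _
      · rw [if_neg hxw]
        exact Finset.mem_insert.mpr (Or.inr (Finset.mem_erase.mpr ⟨hxw, hxA⟩))
  have hd : D.d w u = D.d f.1 f.2 := by
    rcases hor with rfl | rfl
    · exact D.symm w u
    · rfl
  calc dH1 A B ≤ dH1 A A₂ + dH1 A₂ B := h_tri _ _ _
    _ ≤ D.d w u + ∑ e ∈ E.erase f, D.d e.1 e.2 :=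
        add_le_add (move_replace h_ne A hwA u) (hIH _ _ hH2)
    _ = ∑ e ∈ E, D.d e.1 e.2 := by
        rw [hd]; exact Finset.add_sum_erase E (fun e => D.d e.1 e.2) hfE

lemma key {D : DistSpace X} {dH1 : Finset X → Finset X → ℝ≥0∞}
    (h_refl : ∀ A, dH1 A A = 0)
    (h_symm : ∀ A B, dH1 A B = dH1 B A)
    (h_tri : ∀ A B C, dH1 A C ≤ dH1 A B + dH1 B C)
    (h_ne : ∀ (n : ℕ) (c : Finset (Fin n)) (f g : Fin n → X),
      dH1 (c.image f) (c.image g) ≤ l1Dist D f g) :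
    ∀ (N : ℕ) (E : Finset (X × X)), E.card ≤ N → ∀ A B : Finset X, Hyp E A B →
      dH1 A B ≤ ∑ e ∈ E, D.d e.1 e.2 := by
  have hempty : ∀ A B : Finset X, Hyp (∅ : Finset (X × X)) A B → A = B := by
    intro A B hH
    apply Finset.Subset.antisymm
    · intro x hx
      by_cases hxB : x ∈ B
      · exact hxB
      · obtain ⟨y, hyB, hr⟩ := hH.1 x hx hxB
        exact (reach_empty hr) ▸ hyB
    · intro y hy
      by_cases hyA : y ∈ A
      · exact hyA
      · obtain ⟨x, hxA, hr⟩ := hH.2 y hy hyA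
        exact (reach_empty hr) ▸ hxA
  intro N
  induction N with
  | zero =>
    intro E hcard A B hH
    have hE : E = ∅ := Finset.card_eq_zero.mp (Nat.le_zero.mp hcard)
    subst hE
    rw [hempty A B hH, h_refl]
    exact zero_le
  | succ N ih =>
    intro E hcard A B hH
    by_cases hAB : A = B
    · rw [hAB, h_refl]; exact zero_le
    by_cases hE : E = ∅
    · subst hE; exact absurd (hempty A B hH) hAB
    have hcard' : ∀ e ∈ E, (E.erase e).card ≤ N := fun e he => by
      rw [Finset.card_erase_of_mem he]; omega
    by_cases hred : ∃ e ∈ E, Reach (E.erase e) e.1 e.2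
    · obtain ⟨e, heE, hr⟩ := hred
      have hH' : Hyp (E.erase e) A B := by
        constructor
        · intro x hx hxB
          obtain ⟨y, hyB, h⟩ := hH.1 x hx hxB
          exact ⟨y, hyB, reach_of_redundant hr h⟩
        · intro y hy hyA
          obtain ⟨x, hxA, h⟩ := hH.2 y hy hyA
          exact ⟨x, hxA, reach_of_redundant hr h⟩
      exact (ih _ (hcard' e heE) A B hH').trans
        (Finset.sum_le_sum_of_subset (Finset.erase_subset _ _))
    push_neg at hred
    by_cases hfree : ∃ e ∈ E, Hyp (E.erase e) A B
    · obtain ⟨e, heE, hH'⟩ := hfree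
      exact (ih _ (hcard' e heE) A B hH').trans
        (Finset.sum_le_sum_of_subset (Finset.erase_subset _ _))
    push_neg at hfree
    obtain ⟨e₀, he₀⟩ := Finset.nonempty_iff_ne_empty.mpr hE
    obtain ⟨f, w, ⟨hfE, hwor, hleaf⟩, -⟩ := leaf_exists hred he₀ (Or.inl rfl)
    obtain ⟨u, hor⟩ := other_end hwor
    have huor : u = f.1 ∨ u = f.2 := by
      rcases hor with rfl | rfl
      exacts [Or.inl rfl, Or.inr rfl]
    have hIHf : ∀ g ∈ E, ∀ A' B' : Finset X, Hyp (E.erase g) A' B' →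
        dH1 A' B' ≤ ∑ e ∈ E.erase g, D.d e.1 e.2 :=
      fun g hg A' B' h => ih _ (hcard' g hg) A' B' h
    have hinAB : ∀ A' B' : Finset X, Hyp E A' B' → (∀ e ∈ E, ¬ Hyp (E.erase e) A' B') →
        ∀ g : X × X, ∀ w₂ : X, g ∈ E → (w₂ = g.1 ∨ w₂ = g.2) →
          (∀ h ∈ E.erase g, w₂ ≠ h.1 ∧ w₂ ≠ h.2) → w₂ ∉ A' → w₂ ∉ B' → False := by
      intro A' B' hH' hfree' g w₂ hgE hw₂or hleaf₂ hw₂A hw₂B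
      obtain ⟨u₂, hor₂⟩ := other_end hw₂or
      apply hfree' g hgE
      constructor
      · intro x hx hxB
        obtain ⟨y, hyB, hr⟩ := hH'.1 x hx hxB
        have hs := reach_subst hgE hor₂ hleaf₂ hr
        rw [if_neg (show x ≠ w₂ from fun h => hw₂A (h ▸ hx)),
            if_neg (show y ≠ w₂ from fun h => hw₂B (h ▸ hyB))] at hs
        exact ⟨y, hyB, hs⟩
      · intro y hy hyA
        obtain ⟨x, hxA, hr⟩ := hH'.2 y hy hyA
        have hs := reach_subst hgE hor₂ hleaf₂ hr
        rw [if_neg (show y ≠ w₂ from fun h => hw₂B (h ▸ hy)),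
            if_neg (show x ≠ w₂ from fun h => hw₂A (h ▸ hxA))] at hs
        exact ⟨x, hxA, hs⟩
    by_cases hwA : w ∈ A <;> by_cases hwB : w ∈ B
    · -- hard case : w ∈ A ∩ B
      have hmain : ∀ A' B' : Finset X, Hyp E A' B' →
          (∀ e ∈ E, ¬ Hyp (E.erase e) A' B') → w ∈ B' →
          (∃ x₀ ∈ A', x₀ ∉ B' ∧ ∀ y ∈ B', ¬ Reach (E.erase f) x₀ y) →
          dH1 A' B' ≤ ∑ e ∈ E, D.d e.1 e.2 := by
        rintro A' B' hH' hfree' hwB' ⟨x₀, hx₀A, hx₀B, hx₀⟩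
        obtain ⟨y₀, hy₀B, hr₀⟩ := hH'.1 x₀ hx₀A hx₀B
        have hx₀w : x₀ ≠ w := fun h => hx₀B (h ▸ hwB')
        have hsub₀ := reach_subst hfE hor hleaf hr₀
        rw [if_neg hx₀w] at hsub₀
        have hru : Reach (E.erase f) x₀ u := by
          by_cases hy₀ : y₀ = w
          · rwa [if_pos hy₀] at hsub₀
          · rw [if_neg hy₀] at hsub₀
            exact absurd hsub₀ (hx₀ y₀ hy₀B)
        have hucomp : ∀ y ∈ B', ¬ Reach (E.erase f) u y :=
          fun y hy hr => hx₀ y hy (hru.trans hr)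
        obtain ⟨g, w₂, ⟨hgE, hw₂or, hleaf₂⟩, hr₂⟩ := leaf_exists hred hfE huor
        have hw₂B : w₂ ∉ B' := fun h => hucomp w₂ h hr₂
        have hw₂A : w₂ ∈ A' := by
          by_contra hcon
          exact hinAB A' B' hH' hfree' g w₂ hgE hw₂or hleaf₂ hcon hw₂B
        obtain ⟨u₂, hor₂⟩ := other_end hw₂or
        exact process h_tri h_ne hgE hor₂ hleaf₂ (hIHf g hgE) hH' hw₂A hw₂B
      have hnf : ¬ ((∀ x ∈ A, x ∉ B → ∃ y ∈ B, Reach (E.erase f) x y) ∧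
          (∀ y ∈ B, y ∉ A → ∃ x ∈ A, Reach (E.erase f) y x)) := hfree f hfE
      rcases not_and_or.mp hnf with hnf | hnf
      · push_neg at hnf
        exact hmain A B hH hfree hwB hnf
      · push_neg at hnf
        rw [h_symm]
        exact hmain B A (hyp_symm hH) (fun e he h => hfree e he (hyp_symm h)) hwA hnf
    · exact process h_tri h_ne hfE hor hleaf (hIHf f hfE) hH hwA hwB
    · rw [h_symm]
      exact process h_tri h_ne hfE hor hleaf (hIHf f hfE) (hyp_symm hH) hwB hwA
    · exact absurd (hinAB A B hH hfree f w hfE hwor hleaf hwA hwB) not_false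

def GSet (D : DistSpace X) (A B : Finset X) : Set ℝ≥0∞ :=
  {ℓ : ℝ≥0∞ | ∃ (V : Finset X) (E : Finset (X × X)),
    (∀ e ∈ E, e.1 ∈ V ∧ e.2 ∈ V) ∧
    (↑A ∪ ↑B : Set X) ⊆ (V : Set X) ∧
    (∀ v ∈ V, (∃ x ∈ A, Reach E v x) ∧ (∃ y ∈ B, Reach E v y)) ∧
    ℓ = ∑ e ∈ E, D.d e.1 e.2}

lemma sum_image_le' {α β : Type*} [DecidableEq β] (s : Finset α) (φ : α → β)
    (F : β → ℝ≥0∞) : ∑ y ∈ s.image φ, F y ≤ ∑ x ∈ s, F (φ x) := by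
  induction s using Finset.induction_on with
  | empty => simp
  | insert _ _ hx ih =>
    rename_i a s
    rw [Finset.image_insert, Finset.sum_insert hx]
    by_cases h : φ a ∈ s.image φ
    · rw [Finset.insert_eq_self.mpr h]
      exact ih.trans le_add_self
    · rw [Finset.sum_insert h]
      exact add_le_add le_rfl ih

lemma sum_union_le' {α : Type*} [DecidableEq α] (s t : Finset α) (F : α → ℝ≥0∞) :
    ∑ x ∈ s ∪ t, F x ≤ ∑ x ∈ s, F x + ∑ x ∈ t, F x := by
  induction s using Finset.induction_on with
  | empty => simp
  | insert _ _ hx ih =>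
    rename_i a s
    rw [Finset.insert_union, Finset.sum_insert hx]
    by_cases h : a ∈ s ∪ t
    · rw [Finset.insert_eq_self.mpr h]
      exact ih.trans (add_le_add le_add_self le_rfl)
    · rw [Finset.sum_insert h, add_assoc]
      exact add_le_add le_rfl ih

lemma gset_refl (D : DistSpace X) (A : Finset X) : sInf (GSet D A A) = 0 := by
  refine le_antisymm (sInf_le ?_) (zero_le)
  exact ⟨A, ∅, by simp, by simp, fun v hv =>
    ⟨⟨v, hv, Relation.ReflTransGen.refl⟩, ⟨v, hv, Relation.ReflTransGen.refl⟩⟩, by simp⟩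

lemma gset_symm (D : DistSpace X) (A B : Finset X) : GSet D A B = GSet D B A := by
  ext ℓ
  constructor <;> rintro ⟨V, E, h1, h2, h3, h4⟩ <;>
    exact ⟨V, E, h1, by rw [Set.union_comm]; exact h2,
      fun v hv => ⟨(h3 v hv).2, (h3 v hv).1⟩, h4⟩

lemma gset_tri (D : DistSpace X) (A B C : Finset X) :
    sInf (GSet D A C) ≤ sInf (GSet D A B) + sInf (GSet D B C) := by
  have hstep : ∀ p ∈ GSet D A B, ∀ q ∈ GSet D B C, sInf (GSet D A C) ≤ p + q := by
    rintro p ⟨V₁, E₁, hE₁, hab₁, hc₁, rfl⟩ q ⟨V₂, E₂, hE₂, hab₂, hc₂, rfl⟩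
    have hmem : (∑ e ∈ E₁ ∪ E₂, D.d e.1 e.2) ∈ GSet D A C := by
      refine ⟨V₁ ∪ V₂, E₁ ∪ E₂, ?_, ?_, ?_, rfl⟩
      · intro e he
        rcases Finset.mem_union.mp he with h | h
        · exact ⟨Finset.mem_union_left _ (hE₁ e h).1, Finset.mem_union_left _ (hE₁ e h).2⟩
        · exact ⟨Finset.mem_union_right _ (hE₂ e h).1, Finset.mem_union_right _ (hE₂ e h).2⟩
      · rw [Finset.coe_union]
        rintro x (hx | hx)
        · exact Set.mem_union_left _ (hab₁ (Set.mem_union_left _ hx))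
        · exact Set.mem_union_right _ (hab₂ (Set.mem_union_right _ hx))
      · intro v hv
        rcases Finset.mem_union.mp hv with hv | hv
        · obtain ⟨⟨x, hxA, hrx⟩, ⟨y, hyB, hry⟩⟩ := hc₁ v hv
          refine ⟨⟨x, hxA, reach_mono Finset.subset_union_left hrx⟩, ?_⟩
          have hyV₂ : y ∈ V₂ := hab₂ (Set.mem_union_left _ (Finset.mem_coe.mpr hyB))
          obtain ⟨-, ⟨z, hzC, hrz⟩⟩ := hc₂ y hyV₂
          exact ⟨z, hzC, (reach_mono Finset.subset_union_left hry).trans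
            (reach_mono Finset.subset_union_right hrz)⟩
        · obtain ⟨⟨x, hxB, hrx⟩, ⟨y, hyC, hry⟩⟩ := hc₂ v hv
          refine ⟨?_, ⟨y, hyC, reach_mono Finset.subset_union_right hry⟩⟩
          have hxV₁ : x ∈ V₁ := hab₁ (Set.mem_union_right _ (Finset.mem_coe.mpr hxB))
          obtain ⟨⟨z, hzA, hrz⟩, -⟩ := hc₁ x hxV₁
          exact ⟨z, hzA, (reach_mono Finset.subset_union_right hrx).trans
            (reach_mono Finset.subset_union_left hrz)⟩
    exact (sInf_le hmem).trans (sum_union_le' E₁ E₂ _)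
  have h1 : sInf (GSet D A B) + sInf (GSet D B C) =
      ⨅ p : GSet D A B, ((p : ℝ≥0∞) + sInf (GSet D B C)) := by
    rw [sInf_eq_iInf' (GSet D A B), ENNReal.iInf_add]
  rw [h1]
  refine le_iInf fun p => ?_
  have h2 : (p : ℝ≥0∞) + sInf (GSet D B C) = ⨅ q : GSet D B C, ((p : ℝ≥0∞) + (q : ℝ≥0∞)) := by
    rw [sInf_eq_iInf' (GSet D B C), ENNReal.add_iInf]
  rw [h2]
  exact le_iInf fun q => hstep p p.2 q q.2

lemma gset_ne (D : DistSpace X) {n : ℕ} (c : Finset (Fin n)) (f g : Fin n → X) :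
    sInf (GSet D (c.image f) (c.image g)) ≤ l1Dist D f g := by
  have hmem : (∑ e ∈ c.image (fun i => (f i, g i)), D.d e.1 e.2) ∈
      GSet D (c.image f) (c.image g) := by
    refine ⟨c.image f ∪ c.image g, c.image (fun i => (f i, g i)), ?_, ?_, ?_, rfl⟩
    · intro e he
      obtain ⟨i, hi, rfl⟩ := Finset.mem_image.mp he
      exact ⟨Finset.mem_union_left _ (Finset.mem_image_of_mem f hi),
             Finset.mem_union_right _ (Finset.mem_image_of_mem g hi)⟩
    · rw [Finset.coe_union]
    · intro v hv
      rcases Finset.mem_union.mp hv with hv | hv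
      · obtain ⟨i, hi, rfl⟩ := Finset.mem_image.mp hv
        exact ⟨⟨f i, Finset.mem_image_of_mem f hi, Relation.ReflTransGen.refl⟩,
               ⟨g i, Finset.mem_image_of_mem g hi,
                Relation.ReflTransGen.single (Or.inl (Finset.mem_image_of_mem _ hi))⟩⟩
      · obtain ⟨i, hi, rfl⟩ := Finset.mem_image.mp hv
        exact ⟨⟨f i, Finset.mem_image_of_mem f hi,
                Relation.ReflTransGen.single (Or.inr (Finset.mem_image_of_mem _ hi))⟩,
               ⟨g i, Finset.mem_image_of_mem g hi, Relation.ReflTransGen.refl⟩⟩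
  refine (sInf_le hmem).trans ((sum_image_le' c _ _).trans ?_)
  rw [l1Dist]
  exact Finset.sum_le_sum_of_subset (Finset.subset_univ c)

end Aux

/-- Graph-theoretic description of `d^1_{HX}`: for finite subsets `a, b` of a
distance space, `d_{HX}(a,b) ≤ d^1_{HX}(a,b)` and `d^1_{HX}(a,b)` equals the
infimum of the lengths `ℓ(Γ) = Σ_{e∈E} diam(e)` over all graphs `Γ = (V,E)` in
`X` with `a ∪ b ⊆ V` such that every connected component of `Γ` meets both `a`
and `b` (`∞` if no such graph exists). -/
theorem stmt18 {X : Type*} [DecidableEq X] (D : DistSpace X)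
    (dH1 : Finset X → Finset X → ℝ≥0∞)
    (h_refl : ∀ A, dH1 A A = 0)
    (h_symm : ∀ A B, dH1 A B = dH1 B A)
    (h_tri : ∀ A B C, dH1 A C ≤ dH1 A B + dH1 B C)
    (h_ne : ∀ (n : ℕ) (c : Finset (Fin n)) (f g : Fin n → X),
      dH1 (c.image f) (c.image g) ≤ l1Dist D f g)
    (h_max : ∀ ρ : Finset X → Finset X → ℝ≥0∞,
      (∀ A, ρ A A = 0) → (∀ A B, ρ A B = ρ B A) →
      (∀ A B C, ρ A C ≤ ρ A B + ρ B C) →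
      (∀ (n : ℕ) (c : Finset (Fin n)) (f g : Fin n → X),
        ρ (c.image f) (c.image g) ≤ l1Dist D f g) →
      ∀ A B, ρ A B ≤ dH1 A B)
    (a b : Finset X) :
    hausDist D a b ≤ dH1 a b ∧
    dH1 a b = sInf {ℓ : ℝ≥0∞ | ∃ (V : Finset X) (E : Finset (X × X)),
      (∀ e ∈ E, e.1 ∈ V ∧ e.2 ∈ V) ∧
      (↑a ∪ ↑b : Set X) ⊆ (V : Set X) ∧
      (∀ v ∈ V, (∃ x ∈ a, Reach E v x) ∧ (∃ y ∈ b, Reach E v y)) ∧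
      ℓ = ∑ e ∈ E, D.d e.1 e.2} := by
  classical
  have hkey : ∀ (E : Finset (X × X)) (A B : Finset X), Hyp E A B →
      dH1 A B ≤ ∑ e ∈ E, D.d e.1 e.2 :=
    fun E A B h => key h_refl h_symm h_tri h_ne E.card E le_rfl A B h
  have hle : dH1 a b ≤ sInf (GSet D a b) := by
    apply le_sInf
    rintro ℓ ⟨V, E, hE, hab, hcomp, rfl⟩
    apply hkey E a b
    constructor
    · intro x hx _
      have hxV : x ∈ V := hab (Set.mem_union_left _ (Finset.mem_coe.mpr hx))
      exact (hcomp x hxV).2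
    · intro y hy _
      have hyV : y ∈ V := hab (Set.mem_union_right _ (Finset.mem_coe.mpr hy))
      exact (hcomp y hyV).1
  have hge : sInf (GSet D a b) ≤ dH1 a b :=
    h_max (fun A B => sInf (GSet D A B)) (fun A => gset_refl D A)
      (fun A B => congrArg sInf (gset_symm D A B)) (fun A B C => gset_tri D A B C)
      (fun n c f g => gset_ne D c f g) a b
  have heq : dH1 a b = sInf (GSet D a b) := le_antisymm hle hge
  constructor
  · rw [hausDist]
    split_ifs with h1 h2
    · exact zero_le
    · rw [heq]
      have hemp : GSet D a b = ∅ := by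
        rw [Set.eq_empty_iff_forall_notMem]
        rintro ℓ ⟨V, E, hE, hab, hcomp, rfl⟩
        rcases h2 with rfl | rfl
        · have hb : b.Nonempty := Finset.nonempty_iff_ne_empty.mpr (fun h => h1 h.symm)
          obtain ⟨y, hy⟩ := hb
          have hyV : y ∈ V := hab (Set.mem_union_right _ (Finset.mem_coe.mpr hy))
          obtain ⟨⟨x, hx, -⟩, -⟩ := hcomp y hyV
          exact absurd hx (Finset.notMem_empty x)
        · have ha : a.Nonempty := Finset.nonempty_iff_ne_empty.mpr (fun h => h1 h)
          obtain ⟨x, hx⟩ := ha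
          have hxV : x ∈ V := hab (Set.mem_union_left _ (Finset.mem_coe.mpr hx))
          obtain ⟨-, ⟨y, hy, -⟩⟩ := hcomp x hxV
          exact absurd hy (Finset.notMem_empty y)
      rw [hemp, sInf_empty]
    · apply max_le
      · rw [heq]
        apply le_sInf
        rintro ℓ ⟨V, E, hE, hab, hcomp, rfl⟩
        refine iSup₂_le fun x hx => ?_
        have hxV : x ∈ V := hab (Set.mem_union_left _ (Finset.mem_coe.mpr hx))
        obtain ⟨-, ⟨y, hy, hr⟩⟩ := hcomp x hxV
        exact (iInf₂_le y hy).trans (d_le_of_reach D E.card E le_rfl x y hr)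
      · rw [heq]
        apply le_sInf
        rintro ℓ ⟨V, E, hE, hab, hcomp, rfl⟩
        refine iSup₂_le fun y hy => ?_
        have hyV : y ∈ V := hab (Set.mem_union_right _ (Finset.mem_coe.mpr hy))
        obtain ⟨⟨x, hx, hr⟩, -⟩ := hcomp y hyV
        refine (iInf₂_le x hx).trans ?_
        rw [D.symm]
        exact d_le_of_reach D E.card E le_rfl y x hr
  · exact heq
end

section
/- Let M be a two-element group, X a geodesic-enough space in the following sense: (X,d_X) is a Lipschitz-geodesic distance space (any two points at finite distance are joined by a Lipschitz path from [0,1]). Let F_0X be the group of finitely supported functions φ : X → M with Σ_{x∈X} φ(x) = 0, and for p > 1 define the norm ‖φ‖ as the infimum of Σ_i d^p-costs over all linking chains from φ to 0 (equivalently, d^p_{FX}(φ,0) for the ℓ^p-metrization of the functor of M-valued finitary functions). Then for every φ ∈ F_0X with Σ_{x∈E} φ(x) = 0 on every pseudometric component E of X, one has d^p_{FX}(φ,0) = 0. -/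
open scoped ENNReal NNReal Classical

/-- The map `ξ^a : X^n → F(X,M)` of the functor of `M`-valued finitary
functions: `f ↦ (y ↦ Σ_{f(i)=y} a(i))`. -/
noncomputable def pushFwd {X M : Type*} [AddCommMonoid M] {n : ℕ}
    (a : Fin n → M) (f : Fin n → X) : X →₀ M :=
  ∑ i, Finsupp.single (f i) (a i)

-- auxiliary lemmas

lemma pushFwd_append {X M : Type*} [AddCommMonoid M] {m s : ℕ}
    (a : Fin m → M) (b : Fin s → M) (f : Fin m → X) (w : Fin s → X) :
    pushFwd (Fin.append a b) (Fin.append f w) = pushFwd a f + pushFwd b w := by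
  unfold pushFwd
  rw [Fin.sum_univ_add]
  simp [Fin.append_left, Fin.append_right]

lemma exists_pushFwd {X M : Type*} [AddCommMonoid M] (ψ : X →₀ M) :
    ∃ (s : ℕ) (b : Fin s → M) (w : Fin s → X), pushFwd b w = ψ := by
  induction ψ using Finsupp.induction with
  | zero => exact ⟨0, ![], ![], by simp [pushFwd]⟩
  | single_add x c ψ hx hc ih =>
    obtain ⟨s, b, w, hw⟩ := ih
    refine ⟨s + 1, Fin.cons c b, Fin.cons x w, ?_⟩
    unfold pushFwd at hw ⊢
    rw [Fin.sum_univ_succ]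
    simp [hw]

lemma sum_range_two_mul_cancel {A : Type*} [AddCommMonoid A] (u : ℕ → A)
    (h : ∀ j, u (2 * j) + u (2 * j + 1) = 0) (k : ℕ) :
    ∑ i ∈ Finset.range (2 * k), u i = 0 := by
  induction k with
  | zero => simp
  | succ k ih =>
    have h2 : 2 * (k + 1) = 2 * k + 1 + 1 := by ring
    rw [h2, Finset.sum_range_succ, Finset.sum_range_succ, ih, zero_add]
    exact h k

lemma lpDist_le_bound {X : Type*} (d : X → X → ℝ≥0∞) {p : ℝ≥0∞} (hp : 1 < p)
    {n : ℕ} (f g : Fin n → X) (δ : ℝ≥0∞) (h : ∀ i, d (f i) (g i) ≤ δ) :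
    lpDist d p f g ≤ (n : ℝ≥0∞) ^ (p.toReal)⁻¹ * δ := by
  unfold lpDist
  split_ifs with hp'
  · simp only [hp', ENNReal.toReal_top, inv_zero, ENNReal.rpow_zero, one_mul]
    exact iSup_le h
  · have ht : 1 < p.toReal := by
      rw [← ENNReal.toReal_one] at *
      exact (ENNReal.toReal_lt_toReal (by simp) hp').mpr hp
    have ht0 : (0:ℝ) < p.toReal := by linarith
    have hinv : (0:ℝ) ≤ (p.toReal)⁻¹ := by positivity
    rw [one_div]
    calc (∑ i, d (f i) (g i) ^ p.toReal) ^ (p.toReal)⁻¹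
        ≤ (∑ _i : Fin n, δ ^ p.toReal) ^ (p.toReal)⁻¹ := by
          refine ENNReal.rpow_le_rpow ?_ hinv
          exact Finset.sum_le_sum fun i _ => ENNReal.rpow_le_rpow (h i) ht0.le
      _ = ((n : ℝ≥0∞) * δ ^ p.toReal) ^ (p.toReal)⁻¹ := by
          simp [Finset.sum_const, nsmul_eq_mul]
      _ = (n : ℝ≥0∞) ^ (p.toReal)⁻¹ * δ := by
          rw [ENNReal.mul_rpow_of_nonneg _ _ hinv, ← ENNReal.rpow_mul,
            mul_inv_cancel₀ ht0.ne', ENNReal.rpow_one]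

lemma lpDist_append_le {X : Type*} (D : DistSpace X) {p : ℝ≥0∞} (hp : 1 < p)
    {m s : ℕ} (u v : Fin m → X) (w : Fin s → X) :
    lpDist D.d p (Fin.append u w) (Fin.append v w) ≤ lpDist D.d p u v := by
  unfold lpDist
  split_ifs with hp'
  · refine iSup_le fun i => ?_
    induction i using Fin.addCases with
    | left i => simp only [Fin.append_left]; exact le_iSup (fun j => D.d (u j) (v j)) i
    | right i => simp [Fin.append_right, D.refl]
  · have ht : 1 < p.toReal := by
      rw [← ENNReal.toReal_one] at *
      exact (ENNReal.toReal_lt_toReal (by simp) hp').mpr hp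
    have ht0 : (0:ℝ) < p.toReal := by linarith
    refine ENNReal.rpow_le_rpow ?_ (by positivity)
    rw [Fin.sum_univ_add]
    simp only [Fin.append_left, Fin.append_right, D.refl,
      ENNReal.zero_rpow_of_pos ht0, Finset.sum_const_zero, add_zero]
    exact le_rfl

lemma exists_subdiv (L ε : ℝ≥0) (hε : 0 < ε) (q : ℝ) (hq0 : 0 ≤ q) (hq1 : q < 1) :
    ∃ k : ℕ, (((2 * k + 2 : ℕ) : ℝ≥0)) ^ q * (L * (((2 * k + 1 : ℕ) : ℝ≥0))⁻¹) ≤ ε / 2 := by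
  set r : ℝ := 1 - q with hr
  have hr0 : 0 < r := by simp [hr]; linarith
  obtain ⟨j, hj⟩ := exists_nat_ge ((4 * L / ε) ^ (1 / r) : ℝ≥0)
  refine ⟨j, ?_⟩
  set n : ℕ := 2 * j + 1 with hn
  have hn1 : 1 ≤ n := by omega
  have hn0 : (((n:ℕ) : ℝ≥0)) ≠ 0 := by
    simpa using (by omega : n ≠ 0)
  have hnr0 : ((n:ℕ):ℝ≥0) ^ r ≠ 0 := by
    simp [NNReal.rpow_eq_zero_iff, hn0]
  -- n ≥ threshold
  have hth : ((4 * L / ε) ^ (1 / r) : ℝ≥0) ≤ ((n:ℕ) : ℝ≥0) := by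
    refine le_trans hj ?_
    exact_mod_cast Nat.cast_le.mpr (by omega : j ≤ n)
  have hkey : 4 * L ≤ ε * ((n:ℕ):ℝ≥0) ^ r := by
    have h1 : (4 * L / ε : ℝ≥0) ≤ ((n:ℕ):ℝ≥0) ^ r := by
      have := NNReal.rpow_le_rpow hth hr0.le
      rwa [← NNReal.rpow_mul, one_div, inv_mul_cancel₀ hr0.ne', NNReal.rpow_one] at this
    calc 4 * L = ε * (4 * L / ε) := by
            rw [mul_div_assoc']
            rw [eq_comm, mul_comm ε, mul_div_assoc, div_self hε.ne', mul_one]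
      _ ≤ ε * ((n:ℕ):ℝ≥0) ^ r := by exact mul_le_mul_right h1 ε
  -- main chain
  have hN2n : (((2 * j + 2 : ℕ)) : ℝ≥0) ≤ 2 * ((n:ℕ):ℝ≥0) := by
    have : (2 * j + 2 : ℕ) ≤ 2 * n := by omega
    calc (((2 * j + 2 : ℕ)) : ℝ≥0) ≤ ((2 * n : ℕ) : ℝ≥0) := by exact_mod_cast this
      _ = 2 * ((n:ℕ):ℝ≥0) := by push_cast; ring
  have step1 : (((2 * j + 2 : ℕ) : ℝ≥0)) ^ q ≤ 2 * ((n:ℕ):ℝ≥0) ^ q := by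
    calc (((2 * j + 2 : ℕ) : ℝ≥0)) ^ q ≤ (2 * ((n:ℕ):ℝ≥0)) ^ q :=
          NNReal.rpow_le_rpow hN2n hq0
      _ = 2 ^ q * ((n:ℕ):ℝ≥0) ^ q := NNReal.mul_rpow
      _ ≤ 2 * ((n:ℕ):ℝ≥0) ^ q := by
          refine mul_le_mul_of_nonneg_right ?_ zero_le
          calc (2:ℝ≥0) ^ q ≤ 2 ^ (1:ℝ) :=
                NNReal.rpow_le_rpow_of_exponent_le one_le_two hq1.le
            _ = 2 := NNReal.rpow_one 2
  have hpow : ((n:ℕ):ℝ≥0) ^ q * (((n:ℕ):ℝ≥0))⁻¹ = (((n:ℕ):ℝ≥0) ^ r)⁻¹ := by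
    rw [← NNReal.rpow_neg_one ((n:ℕ):ℝ≥0), ← NNReal.rpow_add hn0, ← NNReal.rpow_neg]
    congr 1
    simp [hr]
    ring
  calc (((2 * j + 2 : ℕ) : ℝ≥0)) ^ q * (L * (((n : ℕ) : ℝ≥0))⁻¹)
      ≤ 2 * ((n:ℕ):ℝ≥0) ^ q * (L * (((n:ℕ):ℝ≥0))⁻¹) :=
        mul_le_mul_of_nonneg_right step1 zero_le
    _ = (2 * L) * (((n:ℕ):ℝ≥0) ^ q * (((n:ℕ):ℝ≥0))⁻¹) := by ring
    _ = (2 * L) * ((((n:ℕ):ℝ≥0)) ^ r)⁻¹ := by rw [hpow]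
    _ ≤ ε / 2 := by
        rw [mul_comm, ← div_eq_inv_mul, div_le_iff₀ (hnr0.bot_lt), div_mul_eq_mul_div, le_div_iff₀ (by norm_num : (0:ℝ≥0) < 2)]
        calc 2 * L * 2 = 4 * L := by ring
          _ ≤ ε * ((n:ℕ):ℝ≥0) ^ r := hkey


lemma pair_dist_zero {X : Type*} (D : DistSpace X) {M : Type} [AddCommGroup M]
    (hm2 : ∀ m : M, m + m = 0)
    {p : ℝ≥0∞} (hp : 1 < p)
    (dF : (X →₀ M) → (X →₀ M) → ℝ≥0∞)
    (h_tri : ∀ φ ψ χ, dF φ χ ≤ dF φ ψ + dF ψ χ)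
    (h_ne : ∀ (n : ℕ) (a : Fin n → M) (f g : Fin n → X),
      dF (pushFwd a f) (pushFwd a g) ≤ lpDist D.d p f g)
    (ψ : X →₀ M) (x y : X) (c : M)
    (γ : ℝ → X) (L : ℝ≥0) (hγ0 : γ 0 = x) (hγ1 : γ 1 = y)
    (hLip : ∀ s ∈ Set.Icc (0:ℝ) 1, ∀ t ∈ Set.Icc (0:ℝ) 1,
      D.d (γ s) (γ t) ≤ (L : ℝ≥0∞) * ENNReal.ofReal |s - t|) :
    dF (ψ + Finsupp.single x c + Finsupp.single y c) ψ = 0 := by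
  obtain ⟨s, b, w, hw⟩ := exists_pushFwd ψ
  refine le_antisymm (ENNReal.le_of_forall_pos_le_add fun ε hε _ => ?_) zero_le
  rw [zero_add]
  set q : ℝ := (p.toReal)⁻¹ with hqdef
  have hq0 : 0 ≤ q := by positivity
  have hq1 : q < 1 := by
    by_cases hp' : p = ∞
    · simp [hqdef, hp']
    · have ht : 1 < p.toReal := by
        rw [← ENNReal.toReal_one]
        exact (ENNReal.toReal_lt_toReal (by simp) hp').mpr hp
      rw [hqdef]
      rw [inv_lt_one_iff₀]
      right; exact ht
  obtain ⟨k, hk⟩ := exists_subdiv L ε hε q hq0 hq1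
  set n : ℕ := 2 * k + 1 with hndef
  have hn0 : 0 < n := by omega
  have hnR : (0:ℝ) < n := by exact_mod_cast hn0
  -- the subdivision points
  set z : ℕ → X := fun i => γ ((i : ℝ) / (n : ℝ)) with hzdef
  have hzx : z 0 = x := by simp [hzdef, hγ0]
  have hzy : z n = y := by
    have : ((n:ℝ) / (n:ℝ)) = 1 := div_self hnR.ne'
    simp [hzdef, this, hγ1]
  set δ : ℝ≥0∞ := (L : ℝ≥0∞) * (((n:ℕ) : ℝ≥0∞))⁻¹ with hδdef
  -- displacement bound
  have hdisp : ∀ i j : ℕ, i ≤ n → j ≤ n → i ≤ j → j ≤ i + 1 →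
      D.d (z i) (z j) ≤ δ := by
    intro i j hi hj hij hji
    have hmem : ∀ m : ℕ, m ≤ n → ((m : ℝ) / n) ∈ Set.Icc (0:ℝ) 1 := by
      intro m hm
      constructor
      · positivity
      · rw [div_le_one hnR]; exact_mod_cast hm
    refine le_trans (hLip _ (hmem i hi) _ (hmem j hj)) ?_
    have habs : |(i:ℝ)/n - (j:ℝ)/n| ≤ 1 / n := by
      rw [div_sub_div_same, abs_div, abs_of_pos hnR, div_le_div_iff_of_pos_right hnR]
      rw [abs_sub_comm, abs_of_nonneg (by exact_mod_cast sub_nonneg.mpr (by exact_mod_cast hij : (i:ℝ) ≤ j))]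
      have : (j:ℝ) ≤ i + 1 := by exact_mod_cast hji
      linarith
    refine le_trans (mul_le_mul_right (ENNReal.ofReal_le_ofReal habs) _) ?_
    have : ENNReal.ofReal (1 / (n:ℝ)) = (((n:ℕ):ℝ≥0∞))⁻¹ := by
      rw [one_div, ENNReal.ofReal_inv_of_pos hnR, ENNReal.ofReal_natCast]
    rw [this]
  -- configurations
  set a : Fin (n+1) → M := fun _ => c with hadef
  set f : Fin (n+1) → X := fun i => z i with hfdef
  set f' : Fin (n+1) → X := fun i => z (min n (2 * (((i:ℕ) + 1) / 2))) with hf'def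
  set f'' : Fin (n+1) → X := fun i => z (2 * ((i:ℕ) / 2)) with hf''def
  have bound1 : ∀ i : Fin (n+1), D.d (f' i) (f i) ≤ δ := by
    intro i
    have hi : (i:ℕ) ≤ n := by omega
    have h1 : (i:ℕ) ≤ min n (2 * (((i:ℕ) + 1) / 2)) := by omega
    have h2 : min n (2 * (((i:ℕ) + 1) / 2)) ≤ (i:ℕ) + 1 := by omega
    have h3 : min n (2 * (((i:ℕ) + 1) / 2)) ≤ n := by omega
    rw [D.symm]
    exact hdisp _ _ hi h3 h1 h2
  have bound2 : ∀ i : Fin (n+1), D.d (f i) (f'' i) ≤ δ := by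
    intro i
    have hi : (i:ℕ) ≤ n := by omega
    have h1 : 2 * ((i:ℕ) / 2) ≤ (i:ℕ) := by omega
    have h2 : (i:ℕ) ≤ 2 * ((i:ℕ) / 2) + 1 := by omega
    rw [D.symm]
    exact hdisp _ _ (by omega) hi h1 h2
  -- the three configurations as finsupps
  have P1 : pushFwd a f' = Finsupp.single x c + Finsupp.single y c := by
    unfold pushFwd
    rw [hf'def, hadef]
    rw [Fin.sum_univ_eq_sum_range (fun i => Finsupp.single (z (min n (2 * ((i + 1) / 2)))) c) (n+1)]
    have hsplit : n + 1 = 2 * k + 1 + 1 := by omega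
    rw [hsplit, Finset.sum_range_succ, Finset.sum_range_succ']
    have hmid : ∑ i ∈ Finset.range (2 * k),
        Finsupp.single (z (min n (2 * ((i + 1 + 1) / 2)))) c = 0 := by
      refine sum_range_two_mul_cancel _ ?_ k
      intro j
      have e1 : 2 * ((2 * j + 1 + 1) / 2) = 2 * (j + 1) := by omega
      have e2 : 2 * ((2 * j + 1 + 1 + 1) / 2) = 2 * (j + 1) := by omega
      rw [e1, e2, ← Finsupp.single_add, hm2, Finsupp.single_zero]
    rw [hmid, zero_add]
    have e0 : min n (2 * ((0 + 1) / 2)) = 0 := by omega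
    have eN : min n (2 * ((2 * k + 1 + 1) / 2)) = n := by omega
    rw [e0, eN, hzx, hzy]
  have P2 : pushFwd a f'' = 0 := by
    unfold pushFwd
    rw [hf''def, hadef]
    rw [Fin.sum_univ_eq_sum_range (fun i => Finsupp.single (z (2 * (i / 2))) c) (n+1)]
    have hsplit : n + 1 = 2 * (k + 1) := by omega
    rw [hsplit]
    refine sum_range_two_mul_cancel _ ?_ (k+1)
    intro j
    have e1 : 2 * (2 * j / 2) = 2 * j := by omega
    have e2 : 2 * ((2 * j + 1) / 2) = 2 * j := by omega
    rw [e1, e2, ← Finsupp.single_add, hm2, Finsupp.single_zero]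
  -- lp bounds
  have hE : ∀ g g' : Fin (n+1) → X, (∀ i, D.d (g i) (g' i) ≤ δ) →
      dF (pushFwd (Fin.append a b) (Fin.append g w))
         (pushFwd (Fin.append a b) (Fin.append g' w)) ≤
      ((n+1 : ℕ) : ℝ≥0∞) ^ (p.toReal)⁻¹ * δ := by
    intro g g' hgg'
    refine le_trans (h_ne _ _ _ _) ?_
    refine le_trans (lpDist_append_le D hp g g' w) ?_
    exact lpDist_le_bound D.d hp g g' δ hgg'
  -- the chain
  have key1 : dF (ψ + Finsupp.single x c + Finsupp.single y c) (pushFwd a f + ψ) ≤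
      ((n+1 : ℕ) : ℝ≥0∞) ^ (p.toReal)⁻¹ * δ := by
    have e1 : pushFwd (Fin.append a b) (Fin.append f' w) =
        ψ + Finsupp.single x c + Finsupp.single y c := by
      rw [pushFwd_append, P1, hw]; abel
    have e2 : pushFwd (Fin.append a b) (Fin.append f w) = pushFwd a f + ψ := by
      rw [pushFwd_append, hw]
    rw [← e1, ← e2]
    exact hE f' f bound1
  have key2 : dF (pushFwd a f + ψ) ψ ≤ ((n+1 : ℕ) : ℝ≥0∞) ^ (p.toReal)⁻¹ * δ := by
    have e2 : pushFwd (Fin.append a b) (Fin.append f w) = pushFwd a f + ψ := by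
      rw [pushFwd_append, hw]
    have e3 : pushFwd (Fin.append a b) (Fin.append f'' w) = ψ := by
      rw [pushFwd_append, P2, hw, zero_add]
    rw [← e2, ← e3]
    exact hE f f'' bound2
  -- conclude
  have hcoe : ((n+1 : ℕ) : ℝ≥0∞) ^ (p.toReal)⁻¹ * δ =
      (((((n+1:ℕ)) : ℝ≥0)) ^ q * (L * (((n:ℕ) : ℝ≥0))⁻¹) : ℝ≥0) := by
    have hn0' : (((n+1:ℕ)) : ℝ≥0) ≠ 0 := by
      simp
    have hnn0 : (((n:ℕ)) : ℝ≥0) ≠ 0 := by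
      simpa using (by omega : n ≠ 0)
    rw [hδdef, ← ENNReal.coe_natCast (n+1), ← ENNReal.coe_natCast n,
      ← ENNReal.coe_rpow_of_ne_zero hn0', ← ENNReal.coe_inv hnn0,
      ← ENNReal.coe_mul, ← ENNReal.coe_mul]
  have hfin : dF (ψ + Finsupp.single x c + Finsupp.single y c) ψ ≤
      ((n+1 : ℕ) : ℝ≥0∞) ^ (p.toReal)⁻¹ * δ + ((n+1 : ℕ) : ℝ≥0∞) ^ (p.toReal)⁻¹ * δ :=
    le_trans (h_tri _ (pushFwd a f + ψ) _) (add_le_add key1 key2)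
  refine le_trans hfin ?_
  rw [hcoe, ← ENNReal.coe_add]
  rw [show ((ε : ℝ≥0∞)) = ((ε : ℝ≥0) : ℝ≥0∞) from rfl, ENNReal.coe_le_coe]
  have : ((((n+1:ℕ)) : ℝ≥0)) ^ q * (L * (((n:ℕ) : ℝ≥0))⁻¹) ≤ ε / 2 := by
    have hnn : ((n+1 : ℕ)) = (2*k+2 : ℕ) := by omega
    rw [hnn]; exact hk
  calc ((((n+1:ℕ)) : ℝ≥0)) ^ q * (L * (((n:ℕ) : ℝ≥0))⁻¹) +
        ((((n+1:ℕ)) : ℝ≥0)) ^ q * (L * (((n:ℕ) : ℝ≥0))⁻¹)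
      ≤ ε / 2 + ε / 2 := add_le_add this this
    _ = ε := add_halves ε

/-- For a two-element group `M`, a Lipschitz-geodesic distance space `X`, and
`p > 1`: if `φ : X → M` is finitely supported with total sum `0` and with sum
`0` on each pseudometric component of `X`, then `d^p_{FX}(φ,0) = 0`, where
`d^p_{FX}` is the largest distance on `F(X,M)` making each map
`f ↦ ξ^a(f)` non-expanding from `(X^n, d^p_{X^n})`. -/
theorem stmt19 {X : Type*} (D : DistSpace X)
    (M : Type) [AddCommGroup M] (hM : Nat.card M = 2)
    (hgeo : ∀ x y : X, D.d x y ≠ ∞ → ∃ (γ : ℝ → X) (L : ℝ≥0),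
      γ 0 = x ∧ γ 1 = y ∧ ∀ s ∈ Set.Icc (0 : ℝ) 1, ∀ t ∈ Set.Icc (0 : ℝ) 1,
        D.d (γ s) (γ t) ≤ (L : ℝ≥0∞) * ENNReal.ofReal |s - t|)
    (p : ℝ≥0∞) (hp : 1 < p)
    (dF : (X →₀ M) → (X →₀ M) → ℝ≥0∞)
    (h_refl : ∀ φ, dF φ φ = 0)
    (h_symm : ∀ φ ψ, dF φ ψ = dF ψ φ)
    (h_tri : ∀ φ ψ χ, dF φ χ ≤ dF φ ψ + dF ψ χ)
    (h_ne : ∀ (n : ℕ) (a : Fin n → M) (f g : Fin n → X),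
      dF (pushFwd a f) (pushFwd a g) ≤ lpDist D.d p f g)
    (h_max : ∀ ρ : (X →₀ M) → (X →₀ M) → ℝ≥0∞,
      (∀ φ, ρ φ φ = 0) → (∀ φ ψ, ρ φ ψ = ρ ψ φ) →
      (∀ φ ψ χ, ρ φ χ ≤ ρ φ ψ + ρ ψ χ) →
      (∀ (n : ℕ) (a : Fin n → M) (f g : Fin n → X),
        ρ (pushFwd a f) (pushFwd a g) ≤ lpDist D.d p f g) →
      ∀ φ ψ, ρ φ ψ ≤ dF φ ψ)
    (φ : X →₀ M)
    (hφ0 : ∑ x ∈ φ.support, φ x = 0)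
    (hφ : ∀ z : X, ∑ x ∈ φ.support.filter (fun x => D.d z x ≠ ∞), φ x = 0) :
    dF φ 0 = 0 := by
  classical
  have hfinM : Finite M := Nat.finite_of_card_ne_zero (by omega)
  have hm2 : ∀ m : M, m + m = 0 := by
    intro m
    have h := card_nsmul_eq_zero' (x := m)
    rw [hM, two_nsmul] at h
    exact h
  have huniq : ∀ a b : M, a ≠ 0 → b ≠ 0 → a = b := by
    intro a b ha hb
    by_contra hab
    have : Fintype M := Fintype.ofFinite M
    have h0a : (0:M) ∉ ({a, b} : Finset M) := by
      simp only [Finset.mem_insert, Finset.mem_singleton]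
      push_neg
      exact ⟨fun h => ha h.symm, fun h => hb h.symm⟩
    have hanb : a ∉ ({b} : Finset M) := by simpa using hab
    have hc3 : ({0, a, b} : Finset M).card = 3 := by
      rw [Finset.card_insert_of_notMem h0a, Finset.card_insert_of_notMem hanb,
        Finset.card_singleton]
    have hle : ({0, a, b} : Finset M).card ≤ Fintype.card M := Finset.card_le_univ _
    rw [hc3, ← Nat.card_eq_fintype_card, hM] at hle
    omega
  clear hφ0 h_max h_symm hM
  suffices H : ∀ (N : ℕ) (φ : X →₀ M), φ.support.card ≤ N →
      (∀ z : X, ∑ x ∈ φ.support.filter (fun x => D.d z x ≠ ∞), φ x = 0) →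
      dF φ 0 = 0 by
    exact H φ.support.card φ le_rfl hφ
  intro N
  induction N with
  | zero =>
    intro φ hcard _
    have hφ0 : φ = 0 := by
      rw [← Finsupp.support_eq_empty, ← Finset.card_eq_zero]
      omega
    rw [hφ0]
    exact h_refl 0
  | succ N ih =>
    intro φ hcard hcomp
    rcases eq_or_ne φ 0 with h0 | h0
    · rw [h0]; exact h_refl 0
    obtain ⟨x, hx⟩ := Finsupp.support_nonempty_iff.mpr h0
    have hxval : φ x ≠ 0 := Finsupp.mem_support_iff.mp hx
    set S := φ.support.filter (fun w => D.d x w ≠ ∞) with hS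
    have hxS : x ∈ S := by
      rw [hS, Finset.mem_filter]
      exact ⟨hx, by rw [D.refl]; simp⟩
    have hSsum : ∑ w ∈ S, φ w = 0 := hcomp x
    have hexy : ∃ y ∈ S, y ≠ x := by
      by_contra hcon
      push_neg at hcon
      have hSx : S = {x} := Finset.eq_singleton_iff_unique_mem.mpr ⟨hxS, fun y hy => hcon y hy⟩
      rw [hSx, Finset.sum_singleton] at hSsum
      exact hxval hSsum
    obtain ⟨y, hyS, hyx⟩ := hexy
    have hy : y ∈ φ.support := (Finset.mem_filter.mp hyS).1
    have hxy : D.d x y ≠ ∞ := (Finset.mem_filter.mp hyS).2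
    have hyval : φ y ≠ 0 := Finsupp.mem_support_iff.mp hy
    set c := φ x with hc
    have hyc : φ y = c := huniq _ _ hyval hxval
    set φ' := φ + Finsupp.single x c + Finsupp.single y c with hφ'
    have hsx : Finsupp.single x c + Finsupp.single x c = (0 : X →₀ M) := by
      rw [← Finsupp.single_add, hm2, Finsupp.single_zero]
    have hsy : Finsupp.single y c + Finsupp.single y c = (0 : X →₀ M) := by
      rw [← Finsupp.single_add, hm2, Finsupp.single_zero]
    have hback : φ' + Finsupp.single x c + Finsupp.single y c = φ := by
      rw [hφ']
      calc φ + Finsupp.single x c + Finsupp.single y c + Finsupp.single x c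
            + Finsupp.single y c
          = φ + (Finsupp.single x c + Finsupp.single x c)
            + (Finsupp.single y c + Finsupp.single y c) := by abel
        _ = φ := by rw [hsx, hsy, add_zero, add_zero]
    have hφ'x : φ' x = 0 := by
      rw [hφ', Finsupp.add_apply, Finsupp.add_apply, Finsupp.single_eq_same,
        Finsupp.single_eq_of_ne' hyx, add_zero, ← hc, hm2]
    have hφ'y : φ' y = 0 := by
      rw [hφ', Finsupp.add_apply, Finsupp.add_apply, Finsupp.single_eq_same,
        Finsupp.single_eq_of_ne' (Ne.symm hyx), add_zero, hyc, hm2]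
    have hφ'other : ∀ w, w ≠ x → w ≠ y → φ' w = φ w := by
      intro w hwx hwy
      rw [hφ', Finsupp.add_apply, Finsupp.add_apply,
        Finsupp.single_eq_of_ne' (Ne.symm hwx), Finsupp.single_eq_of_ne' (Ne.symm hwy),
        add_zero, add_zero]
    have hsupp : φ'.support = φ.support \ {x, y} := by
      ext w
      rw [Finsupp.mem_support_iff, Finset.mem_sdiff, Finsupp.mem_support_iff,
        Finset.mem_insert, Finset.mem_singleton]
      constructor
      · intro hw
        rcases eq_or_ne w x with rfl | hwx
        · exact absurd hφ'x hw
        rcases eq_or_ne w y with rfl | hwy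
        · exact absurd hφ'y hw
        rw [hφ'other w hwx hwy] at hw
        exact ⟨hw, by tauto⟩
      · rintro ⟨hw, hwxy⟩
        push_neg at hwxy
        rw [hφ'other w hwxy.1 hwxy.2]
        exact hw
    have hxysub : ({x, y} : Finset X) ⊆ φ.support := by
      intro w hw
      rcases Finset.mem_insert.mp hw with rfl | hw
      · exact hx
      · rw [Finset.mem_singleton.mp hw]; exact hy
    have hcard2 : 2 ≤ φ.support.card := by
      calc 2 = ({x, y} : Finset X).card := (Finset.card_pair (Ne.symm hyx)).symm
        _ ≤ φ.support.card := Finset.card_le_card hxysub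
    have hcard' : φ'.support.card ≤ N := by
      rw [hsupp, Finset.card_sdiff_of_subset hxysub, Finset.card_pair (Ne.symm hyx)]
      omega
    have hcomp' : ∀ z : X, ∑ v ∈ φ'.support.filter (fun v => D.d z v ≠ ∞), φ' v = 0 := by
      intro z
      have hswap : (φ.support \ {x, y}).filter (fun v => D.d z v ≠ ∞)
          = φ.support.filter (fun v => D.d z v ≠ ∞) \ {x, y} := by
        ext v
        simp only [Finset.mem_filter, Finset.mem_sdiff]
        tauto
      have hval : ∀ v ∈ φ.support.filter (fun v => D.d z v ≠ ∞) \ ({x, y} : Finset X),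
          φ' v = φ v := by
        intro v hv
        rw [Finset.mem_sdiff] at hv
        have hv2 := hv.2
        simp only [Finset.mem_insert, Finset.mem_singleton] at hv2
        push_neg at hv2
        exact hφ'other v hv2.1 hv2.2
      rw [hsupp, hswap, Finset.sum_congr rfl hval]
      by_cases hzx : D.d z x ≠ ∞
      · have hzy : D.d z y ≠ ∞ :=
          ne_top_of_le_ne_top (ENNReal.add_ne_top.mpr ⟨hzx, hxy⟩) (D.triangle z x y)
        have hsub : ({x, y} : Finset X) ⊆ φ.support.filter (fun v => D.d z v ≠ ∞) := by
          intro w hw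
          rcases Finset.mem_insert.mp hw with rfl | hw
          · exact Finset.mem_filter.mpr ⟨hx, hzx⟩
          · rw [Finset.mem_singleton.mp hw]
            exact Finset.mem_filter.mpr ⟨hy, hzy⟩
        rw [Finset.sum_sdiff_eq_sub hsub, hcomp z, Finset.sum_pair (Ne.symm hyx),
          hyc, ← hc, hm2, zero_sub, neg_zero]
      · push_neg at hzx
        have hzy : D.d z y = ∞ := by
          by_contra hzy
          have : D.d z x ≤ D.d z y + D.d x y := by
            rw [D.symm x y]
            exact D.triangle z y x
          exact absurd (ne_top_of_le_ne_top (ENNReal.add_ne_top.mpr ⟨hzy, hxy⟩) this) (by simp [hzx])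
        have heq : φ.support.filter (fun v => D.d z v ≠ ∞) \ ({x, y} : Finset X)
            = φ.support.filter (fun v => D.d z v ≠ ∞) := by
          ext v
          simp only [Finset.mem_sdiff, Finset.mem_filter, Finset.mem_insert,
            Finset.mem_singleton]
          constructor
          · tauto
          · intro hv
            refine ⟨hv, ?_⟩
            push_neg
            constructor
            · rintro rfl; exact hv.2 hzx
            · rintro rfl; exact hv.2 hzy
        rw [heq]
        exact hcomp z
    have hstep : dF φ φ' = 0 := by
      obtain ⟨γ, L, hγ0, hγ1, hLip⟩ := hgeo x y hxy
      have hpz := pair_dist_zero D hm2 hp dF h_tri h_ne φ' x y c γ L hγ0 hγ1 hLip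
      rw [hback] at hpz
      exact hpz
    have hind : dF φ' 0 = 0 := ih φ' hcard' hcomp'
    refine le_antisymm ?_ zero_le
    calc dF φ 0 ≤ dF φ φ' + dF φ' 0 := h_tri _ _ _
      _ = 0 := by rw [hstep, hind, add_zero]
end
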